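/- arXiv:2101.00748 — 3 statements merged into one kernel-verified Lean document; each statement's English description precedes it below -/
import Mathlib

section
/- Let γ = -1 if d = 2 and γ = -(d-2)/2 if d ≥ 3. Suppose that 12q^γ + 8q^{d+2}/|E|² + 48q^{(d+1)/2}/|E| ≤ 1. Then |C_5^prod(E) - |E|⁵/q⁵| ≤ (|E|⁵/q⁵)·(12q^γ + 8q^{(2d+3)/2}/|E|² + 32q^{(d+1)/2}/|E|). -/
open Finset
open scoped Classical

/-- The number of cycles of length `n` in the dot-product graph of `E`: tuples
`(x₀,…,x_{n-1}) ∈ Eⁿ` with `x_i · x_{i+1} = t` cyclically, where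
`x·y = x₁y₁ + ⋯ + x_dy_d`. -/
noncomputable def cycleCountProd (F : Type) [Field F] [Fintype F] [DecidableEq F]
    (d n : ℕ) (t : F) (E : Finset (Fin d → F)) : ℕ :=
  (Finset.univ.filter (fun x : Fin n → (Fin d → F) =>
    (∀ i, x i ∈ E) ∧
    ∀ i : Fin n, ∑ j, x i j * x ⟨(i.val + 1) % n, Nat.mod_lt _ i.pos⟩ j = t)).card

set_option linter.unusedSectionVars false
set_option linter.unusedVariables false

namespace CCP5

variable {F : Type} [Field F] [Fintype F] [DecidableEq F] {d : ℕ}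

/-- dot product over F -/
def dotF (x y : Fin d → F) : F := ∑ j, x j * y j

lemma dotF_comm (x y : Fin d → F) : dotF x y = dotF y x :=
  Finset.sum_congr rfl fun j _ => mul_comm _ _

lemma dotF_add (x a b : Fin d → F) : dotF x (a + b) = dotF x a + dotF x b := by
  simp [dotF, mul_add, Finset.sum_add_distrib]

lemma dotF_smul (x : Fin d → F) (c : F) (z : Fin d → F) :
    dotF x (c • z) = c * dotF x z := by
  simp only [dotF, Finset.mul_sum, Pi.smul_apply, smul_eq_mul]
  exact Finset.sum_congr rfl fun j _ => by ring

lemma dotF_sub (x a b : Fin d → F) : dotF x (a - b) = dotF x a - dotF x b := by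
  simp [dotF, mul_sub, Finset.sum_sub_distrib]

lemma dotF_single (x : Fin d → F) (j : Fin d) (a : F) :
    dotF x (Pi.single j a) = x j * a := by
  unfold dotF
  rw [Finset.sum_eq_single j]
  · simp
  · intro b _ hb; rw [Pi.single_eq_of_ne hb, mul_zero]
  · intro h; exact absurd (Finset.mem_univ j) h

lemma dotF_zero_left (z : Fin d → F) : dotF 0 z = 0 := by simp [dotF]

lemma dotF_smul_left (x : Fin d → F) (c : F) (z : Fin d → F) :
    dotF (c • x) z = c * dotF x z := by
  rw [dotF_comm, dotF_smul, dotF_comm]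

/-- dot product with fixed first argument as linear map -/
def dotL (x : Fin d → F) : (Fin d → F) →ₗ[F] F where
  toFun z := dotF x z
  map_add' a b := dotF_add x a b
  map_smul' c a := by simp [dotF_smul]

@[simp] lemma dotL_apply (x z : Fin d → F) : dotL x z = dotF x z := rfl

lemma exists_ne_zero_coord {x : Fin d → F} (hx : x ≠ 0) : ∃ j, x j ≠ 0 := by
  by_contra h; push_neg at h; exact hx (funext h)

lemma dotL_surj {x : Fin d → F} (hx : x ≠ 0) : Function.Surjective (dotL x) := by
  obtain ⟨j, hj⟩ := exists_ne_zero_coord hx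
  intro c
  refine ⟨Pi.single j ((x j)⁻¹ * c), ?_⟩
  simp only [dotL_apply, dotF_single]
  field_simp

/-- all fibers of a surjective linear map have the same size -/
lemma card_fiber_mul {W : Type} [AddCommGroup W] [Module F W] [Fintype W] [DecidableEq W]
    (f : (Fin d → F) →ₗ[F] W) (hf : Function.Surjective f) (c : W) :
    (univ.filter (fun z => f z = c)).card * Fintype.card W
      = Fintype.card (Fin d → F) := by
  have key : ∀ c' : W, (univ.filter (fun z => f z = c')).card
      = (univ.filter (fun z => f z = c)).card := by
    intro c'
    obtain ⟨z1, hz1⟩ := hf c'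
    obtain ⟨z0, hz0⟩ := hf c
    apply Finset.card_bij (fun z _ => z + (z0 - z1))
    · intro a ha
      simp only [mem_filter, mem_univ, true_and] at *
      rw [map_add, map_sub, ha, hz1, hz0]; abel
    · intro a _ b _ h; exact add_right_cancel h
    · intro b hb
      refine ⟨b + (z1 - z0), ?_, by abel⟩
      simp only [mem_filter, mem_univ, true_and] at *
      rw [map_add, map_sub, hb, hz1, hz0]; abel
  have h2 : Fintype.card (Fin d → F) = ∑ c' : W, (univ.filter (fun z => f z = c')).card := by
    rw [← Finset.card_univ]
    exact Finset.card_eq_sum_card_fiberwise (fun z _ => mem_univ (f z))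
  have h3 : ∑ c' : W, (univ.filter (fun z => f z = c')).card
      = Fintype.card W * (univ.filter (fun z => f z = c)).card := by
    calc ∑ c' : W, (univ.filter (fun z => f z = c')).card
        = ∑ _c' : W, (univ.filter (fun z => f z = c)).card :=
          Finset.sum_congr rfl fun c' _ => key c'
      _ = _ := by rw [Finset.sum_const, Finset.card_univ, smul_eq_mul]
  rw [h2, h3, mul_comm]

lemma card_V : Fintype.card (Fin d → F) = Fintype.card F ^ d := by
  simp [Fintype.card_pi]

/-- count of z with x·z = c, for x ≠ 0 -/
lemma count_one {x : Fin d → F} (hx : x ≠ 0) (c : F) :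
    (univ.filter (fun z => dotF x z = c)).card * Fintype.card F
      = Fintype.card F ^ d := by
  have := card_fiber_mul (dotL x) (dotL_surj hx) c
  simp only [card_V] at this
  convert this using 3
  ext z; exact Iff.rfl

lemma exists_perp {x y : Fin d → F} (hx : x ≠ 0) (hy : ∀ lam : F, y ≠ lam • x) :
    ∃ z, dotF x z = 0 ∧ dotF y z ≠ 0 := by
  by_contra h
  push_neg at h
  obtain ⟨j, hj⟩ := exists_ne_zero_coord hx
  set w0 : Fin d → F := (x j)⁻¹ • (Pi.single j 1 : Fin d → F) with hw0
  have hxw0 : dotF x w0 = 1 := by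
    rw [hw0, dotF_smul, dotF_single]; field_simp
  set lam := dotF y w0 with hlam
  have hz : ∀ z, dotF y z = dotF x z * lam := by
    intro z
    have h1 : dotF x (z - (dotF x z) • w0) = 0 := by
      rw [dotF_sub, dotF_smul, hxw0, mul_one, sub_self]
    have h2 := h (z - (dotF x z) • w0) h1
    rw [dotF_sub, dotF_smul, sub_eq_zero] at h2
    rw [h2, hlam]
  apply hy lam
  funext i
  have := hz (Pi.single i 1)
  rw [dotF_single, dotF_single, mul_one, mul_one] at this
  simpa [mul_comm] using this

def dotL2 (x y : Fin d → F) : (Fin d → F) →ₗ[F] F × F := (dotL x).prod (dotL y)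

@[simp] lemma dotL2_apply (x y z : Fin d → F) : dotL2 x y z = (dotF x z, dotF y z) := rfl

lemma dotL2_surj {x y : Fin d → F} (hx : x ≠ 0) (hy : y ≠ 0)
    (hxy : ∀ lam : F, y ≠ lam • x) : Function.Surjective (dotL2 x y) := by
  have hyx : ∀ lam : F, x ≠ lam • y := by
    intro lam hcon
    have hlam : lam ≠ 0 := by
      intro h0; rw [h0, zero_smul] at hcon; exact hx hcon
    apply hxy lam⁻¹
    rw [hcon, smul_smul, inv_mul_cancel₀ hlam, one_smul]
  obtain ⟨a2, ha2x, ha2y⟩ := exists_perp hx hxy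
  obtain ⟨a1, ha1y, ha1x⟩ := exists_perp hy hyx
  rintro ⟨c1, c2⟩
  refine ⟨(c1 * (dotF x a1)⁻¹) • a1 + (c2 * (dotF y a2)⁻¹) • a2, ?_⟩
  simp only [dotL2_apply, dotF_add, dotF_smul, Prod.mk.injEq]
  constructor
  · rw [ha2x]; field_simp; ring
  · rw [ha1y]; field_simp; ring

/-- count of z with x·z = t and y·z = t for "independent" x y -/
lemma count_two {x y : Fin d → F} (hx : x ≠ 0) (hy : y ≠ 0)
    (hxy : ∀ lam : F, y ≠ lam • x) (c1 c2 : F) :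
    (univ.filter (fun z => dotF x z = c1 ∧ dotF y z = c2)).card
      * (Fintype.card F)^2 = Fintype.card F ^ d := by
  have := card_fiber_mul (dotL2 x y) (dotL2_surj hx hy hxy) (c1, c2)
  simp only [card_V, Fintype.card_prod] at this
  rw [← this, sq]
  congr 2
  apply Finset.filter_congr
  intro z _
  simp [Prod.ext_iff]

/-- degenerate cases -/
lemma count_zero_left {t : F} (ht : t ≠ 0) :
    (univ.filter (fun z : Fin d → F => dotF 0 z = t)).card = 0 := by
  rw [Finset.card_eq_zero, Finset.filter_eq_empty_iff]
  intro z _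
  rw [dotF_zero_left]
  exact fun h => ht h.symm

lemma count_collinear {x y : Fin d → F} {t : F} (ht : t ≠ 0) {lam : F}
    (hylam : y = lam • x) (hlam : lam ≠ 1) :
    (univ.filter (fun z => dotF x z = t ∧ dotF y z = t)).card = 0 := by
  rw [Finset.card_eq_zero, Finset.filter_eq_empty_iff]
  rintro z _ ⟨h1, h2⟩
  rw [hylam, dotF_smul_left, h1] at h2
  exact hlam (by field_simp at h2; tauto)

end CCP5

namespace CCP5

variable {F : Type} [Field F] [Fintype F] [DecidableEq F] {d : ℕ}

/-- adjacency matrix of the dot-product graph -/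
noncomputable def Amat (t : F) : Matrix (Fin d → F) (Fin d → F) ℝ :=
  Matrix.of fun x y => if dotF x y = t then 1 else 0

/-- A - J/q -/
noncomputable def Mmat (t : F) : Matrix (Fin d → F) (Fin d → F) ℝ :=
  Matrix.of fun x y => Amat t x y - (Fintype.card F : ℝ)⁻¹

lemma Amat_apply (t : F) (x y : Fin d → F) :
    Amat t x y = if dotF x y = t then 1 else 0 := rfl

lemma Mmat_apply (t : F) (x y : Fin d → F) :
    Mmat t x y = Amat t x y - (Fintype.card F : ℝ)⁻¹ := rfl

lemma Q_pos : (0:ℝ) < (Fintype.card F : ℝ) := by exact_mod_cast Fintype.card_pos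

lemma Q_ne : ((Fintype.card F : ℝ)) ≠ 0 := ne_of_gt Q_pos

lemma Q_ge_two : (2:ℝ) ≤ (Fintype.card F : ℝ) := by exact_mod_cast Fintype.one_lt_card

lemma Q_ge_one : (1:ℝ) ≤ (Fintype.card F : ℝ) := le_trans one_le_two Q_ge_two

lemma count_one_card {x : Fin d → F} (hx : x ≠ 0) (c : F) (hd : 1 ≤ d) :
    (univ.filter (fun z => dotF x z = c)).card = Fintype.card F ^ (d-1) := by
  have h := count_one hx c
  have h2 : Fintype.card F ^ d = Fintype.card F ^ (d-1) * Fintype.card F := by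
    rw [← pow_succ]; congr 1; omega
  rw [h2] at h
  exact Nat.eq_of_mul_eq_mul_right Fintype.card_pos h

lemma N2_card_indep {t : F} {y y' : Fin d → F} (hy : y ≠ 0) (hy' : y' ≠ 0)
    (hrel : ∀ lam : F, y' ≠ lam • y) (hd : 2 ≤ d) :
    ((univ.filter (fun z => dotF y z = t ∧ dotF y' z = t)).card : ℝ)
      = (Fintype.card F : ℝ)^(d-2) := by
  have h := count_two hy hy' hrel t t
  have hcard : (univ.filter (fun z => dotF y z = t ∧ dotF y' z = t)).card
      = Fintype.card F ^ (d-2) := by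
    have h2 : Fintype.card F ^ d = Fintype.card F ^ (d-2) * (Fintype.card F)^2 := by
      rw [← pow_add]; congr 1; omega
    rw [h2] at h
    exact Nat.eq_of_mul_eq_mul_right (pow_pos Fintype.card_pos 2) h
  rw [hcard]; push_cast; ring

lemma N2_zero_left {t : F} (ht : t ≠ 0) {y : Fin d → F} (hy : y = 0) (y' : Fin d → F) :
    (univ.filter (fun z : Fin d → F => dotF y z = t ∧ dotF y' z = t)).card = 0 := by
  subst hy
  rw [Finset.card_eq_zero, Finset.filter_eq_empty_iff]
  rintro z _ ⟨h1, _⟩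
  rw [dotF_zero_left] at h1
  exact ht h1.symm

lemma N2_zero_right {t : F} (ht : t ≠ 0) (y : Fin d → F) {y' : Fin d → F} (hy' : y' = 0) :
    (univ.filter (fun z : Fin d → F => dotF y z = t ∧ dotF y' z = t)).card = 0 := by
  subst hy'
  rw [Finset.card_eq_zero, Finset.filter_eq_empty_iff]
  rintro z _ ⟨_, h2⟩
  rw [dotF_zero_left] at h2
  exact ht h2.symm


lemma sum_ind_deg {t : F} (ht : t ≠ 0) (hd : 1 ≤ d) (y : Fin d → F) :
    ∑ x : Fin d → F, (if dotF y x = t then (1:ℝ) else 0)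
      = if y = 0 then 0 else (Fintype.card F : ℝ)^(d-1) := by
  rw [Finset.sum_boole]
  by_cases hy : y = 0
  · rw [if_pos hy, hy, count_zero_left ht]
    simp
  · rw [if_neg hy, count_one_card hy t hd]
    push_cast
    ring

/-- the column-correlation of M -/
noncomputable def cM2 (t : F) (y y' : Fin d → F) : ℝ := ∑ x, Mmat t x y * Mmat t x y'

def Rel (y y' : Fin d → F) : Prop := y ≠ 0 ∧ ∃ lam : F, lam ≠ 0 ∧ y' = lam • y

lemma ind_mul_ind (P Q : Prop) [Decidable P] [Decidable Q] :
    (if P then (1:ℝ) else 0) * (if Q then (1:ℝ) else 0) = if P ∧ Q then (1:ℝ) else 0 := by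
  by_cases hP : P <;> by_cases hQ : Q <;> simp [hP, hQ]

lemma cM2_eval {t : F} (ht : t ≠ 0) (hd : 2 ≤ d) (y y' : Fin d → F) :
    cM2 t y y' = (if y' = y then (Fintype.card F : ℝ)^(d-1) else 0)
      - (if Rel y y' then (Fintype.card F : ℝ)^(d-2) else 0)
      - (if y = 0 ∧ y' = 0 then (Fintype.card F : ℝ)^(d-1) - (Fintype.card F : ℝ)^(d-2) else 0) := by
  classical
  have hd1 : 1 ≤ d := by omega
  have hq : (Fintype.card F : ℝ) ≠ 0 := Q_ne
  have point : ∀ x, Mmat t x y * Mmat t x y'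
      = (if dotF y x = t then (1:ℝ) else 0) * (if dotF y' x = t then (1:ℝ) else 0)
        - (Fintype.card F : ℝ)⁻¹ * (if dotF y x = t then (1:ℝ) else 0)
        - (Fintype.card F : ℝ)⁻¹ * (if dotF y' x = t then (1:ℝ) else 0)
        + (Fintype.card F : ℝ)⁻¹ * (Fintype.card F : ℝ)⁻¹ := by
    intro x
    rw [Mmat_apply, Mmat_apply, Amat_apply, Amat_apply, dotF_comm x y, dotF_comm x y']
    ring
  have hexp : cM2 t y y' =
      ((univ.filter (fun x : Fin d → F => dotF y x = t ∧ dotF y' x = t)).card : ℝ)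
      - (Fintype.card F : ℝ)⁻¹ * (∑ x : Fin d → F, (if dotF y x = t then (1:ℝ) else 0))
      - (Fintype.card F : ℝ)⁻¹ * (∑ x : Fin d → F, (if dotF y' x = t then (1:ℝ) else 0))
      + (Fintype.card F : ℝ)^d * (Fintype.card F : ℝ)⁻¹ * (Fintype.card F : ℝ)⁻¹ := by
    unfold cM2
    rw [Finset.sum_congr rfl (fun x _ => point x)]
    rw [Finset.sum_add_distrib, Finset.sum_sub_distrib, Finset.sum_sub_distrib]
    rw [← Finset.mul_sum, ← Finset.mul_sum]
    congr 1
    · congr 1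
      congr 1
      · rw [Finset.sum_congr rfl (fun x _ => ind_mul_ind _ _), Finset.sum_boole]
    · rw [Finset.sum_const, Finset.card_univ, card_V, nsmul_eq_mul]
      push_cast
      ring
  rw [hexp, sum_ind_deg ht hd1 y, sum_ind_deg ht hd1 y']
  have e1 : ((Fintype.card F:ℝ))^(d-1) = (Fintype.card F:ℝ)^(d-2) * (Fintype.card F:ℝ) := by
    rw [← pow_succ]; congr 1; omega
  have e2 : ((Fintype.card F:ℝ))^d = (Fintype.card F:ℝ)^(d-2) * (Fintype.card F:ℝ)^2 := by
    rw [← pow_add]; congr 1; omega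
  by_cases hy : y = 0
  · by_cases hy' : y' = 0
    · have hyy : y' = y := by rw [hy, hy']
      have hrel : ¬ Rel y y' := fun h => h.1 hy
      rw [N2_zero_left ht hy, if_pos hyy, if_neg hrel, if_pos (And.intro hy hy'),
        if_pos hy, if_pos hy']
      push_cast
      rw [e1, e2]
      field_simp
      ring
    · have hyy : ¬ (y' = y) := by rw [hy]; exact hy'
      have hrel : ¬ Rel y y' := fun h => h.1 hy
      have hpair : ¬ (y = 0 ∧ y' = 0) := fun h => hy' h.2
      rw [N2_zero_left ht hy, if_neg hyy, if_neg hrel, if_neg hpair, if_pos hy, if_neg hy']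
      push_cast
      rw [e1, e2]
      field_simp
      ring
  · by_cases hy' : y' = 0
    · have hyy : ¬ (y' = y) := by rw [hy']; exact fun h => hy h.symm
      have hrel : ¬ Rel y y' := by
        rintro ⟨_, lam, hlam, hl⟩
        rw [hy'] at hl
        exact smul_ne_zero hlam hy hl.symm
      have hpair : ¬ (y = 0 ∧ y' = 0) := fun h => hy h.1
      rw [N2_zero_right ht y hy', if_neg hyy, if_neg hrel, if_neg hpair, if_neg hy, if_pos hy']
      push_cast
      rw [e1, e2]
      field_simp
      ring
    · have hpair : ¬ (y = 0 ∧ y' = 0) := fun h => hy h.1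
      by_cases hrel : ∃ lam : F, y' = lam • y
      · obtain ⟨lam, hlam⟩ := hrel
        have hlam0 : lam ≠ 0 := by
          intro h0; rw [h0, zero_smul] at hlam; exact hy' hlam
        by_cases hlam1 : lam = 1
        · have hyy : y' = y := by rw [hlam, hlam1, one_smul]
          have hN2 : (univ.filter (fun x : Fin d → F => dotF y x = t ∧ dotF y' x = t)).card
              = Fintype.card F ^ (d-1) := by
            rw [show (univ.filter (fun x : Fin d → F => dotF y x = t ∧ dotF y' x = t))
                = (univ.filter (fun x : Fin d → F => dotF y x = t)) from
              Finset.filter_congr (fun x _ => by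
                constructor
                · exact fun h => h.1
                · exact fun h => ⟨h, by rw [hyy]; exact h⟩)]
            exact count_one_card hy t hd1
          have hRel : Rel y y' := ⟨hy, lam, hlam0, hlam⟩
          rw [hN2, if_pos hyy, if_pos hRel, if_neg hpair, if_neg hy, if_neg hy']
          push_cast
          rw [e1, e2]
          field_simp
          ring
        · have hyy : ¬ (y' = y) := by
            intro h
            rw [h] at hlam
            have h2 : (lam - 1) • y = 0 := by rw [sub_smul, one_smul, ← hlam, sub_self]
            rcases smul_eq_zero.mp h2 with h1 | h1
            · exact hlam1 (by linear_combination h1)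
            · exact hy h1
          have hN2 : (univ.filter (fun x : Fin d → F => dotF y x = t ∧ dotF y' x = t)).card = 0 :=
            count_collinear ht hlam hlam1
          have hRel : Rel y y' := ⟨hy, lam, hlam0, hlam⟩
          rw [hN2, if_neg hyy, if_pos hRel, if_neg hpair, if_neg hy, if_neg hy']
          push_cast
          rw [e1, e2]
          field_simp
          ring
      · push_neg at hrel
        have hyy : ¬ (y' = y) := by
          intro h; exact hrel 1 (by rw [h, one_smul])
        have hRel : ¬ Rel y y' := by
          rintro ⟨_, lam, _, hl⟩; exact hrel lam hl
        rw [N2_card_indep hy hy' hrel hd, if_neg hyy, if_neg hRel, if_neg hpair,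
          if_neg hy, if_neg hy']
        rw [e1, e2]
        field_simp
        ring

end CCP5

namespace CCP5

variable {F : Type} [Field F] [Fintype F] [DecidableEq F] {d : ℕ}

lemma n2M_expand (t : F) (v : (Fin d → F) → ℝ) :
    ∑ x, ((Mmat t).mulVec v x)^2 = ∑ y, ∑ y', cM2 t y y' * (v y * v y') := by
  have h1 : ∀ x : Fin d → F, ((Mmat t).mulVec v x)^2
      = ∑ y, ∑ y', (Mmat t x y * v y) * (Mmat t x y' * v y') := by
    intro x
    rw [sq]
    show (∑ y, Mmat t x y * v y) * (∑ y, Mmat t x y * v y) = _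
    rw [Finset.sum_mul_sum]
  rw [Finset.sum_congr rfl (fun x _ => h1 x), Finset.sum_comm]
  apply Finset.sum_congr rfl
  intro y _
  rw [Finset.sum_comm]
  apply Finset.sum_congr rfl
  intro y' _
  unfold cM2
  rw [Finset.sum_mul]
  apply Finset.sum_congr rfl
  intro x _
  ring

noncomputable def Sv (v : (Fin d → F) → ℝ) : ℝ :=
  ∑ y ∈ univ.filter (fun y : Fin d → F => y ≠ 0),
    ∑ lam ∈ univ.filter (fun l : F => l ≠ 0), v y * v (lam • y)

/-- auxiliary: s-function -/
noncomputable def sfun (v : (Fin d → F) → ℝ) (nu : F) : ℝ :=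
  ∑ w ∈ univ.filter (fun w : Fin d → F => w ≠ 0), v w * v (nu • w)

lemma Sv_eq_sum_sfun (v : (Fin d → F) → ℝ) :
    Sv v = ∑ lam ∈ univ.filter (fun l : F => l ≠ 0), sfun v lam := by
  unfold Sv sfun
  rw [Finset.sum_comm]

lemma Sv_nonneg (v : (Fin d → F) → ℝ) : 0 ≤ Sv v := by
  classical
  set g : (Fin d → F) → ℝ := fun y => ∑ lam ∈ univ.filter (fun l : F => l ≠ 0), v (lam • y)
    with hg
  have hA : ∑ y ∈ univ.filter (fun y : Fin d → F => y ≠ 0), (g y)^2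
      = ((Fintype.card F : ℝ) - 1) * Sv v := by
    have step1 : ∑ y ∈ univ.filter (fun y : Fin d → F => y ≠ 0), (g y)^2
        = ∑ lam ∈ univ.filter (fun l : F => l ≠ 0),
            ∑ mu ∈ univ.filter (fun l : F => l ≠ 0),
              ∑ y ∈ univ.filter (fun y : Fin d → F => y ≠ 0), v (lam • y) * v (mu • y) := by
      have h1 : ∀ y, (g y)^2 = ∑ lam ∈ univ.filter (fun l : F => l ≠ 0),
          ∑ mu ∈ univ.filter (fun l : F => l ≠ 0), v (lam • y) * v (mu • y) := by
        intro y; rw [hg, sq, Finset.sum_mul_sum]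
      rw [Finset.sum_congr rfl (fun y _ => h1 y), Finset.sum_comm]
      apply Finset.sum_congr rfl
      intro lam _
      rw [Finset.sum_comm]
    have step2 : ∀ lam ∈ univ.filter (fun l : F => l ≠ 0),
        ∀ mu ∈ univ.filter (fun l : F => l ≠ 0),
        ∑ y ∈ univ.filter (fun y : Fin d → F => y ≠ 0), v (lam • y) * v (mu • y)
          = sfun v (mu * lam⁻¹) := by
      intro lam hlam mu hmu
      rw [Finset.mem_filter] at hlam hmu
      unfold sfun
      apply Finset.sum_bij (fun y _ => lam • y)
      · intro a ha
        rw [Finset.mem_filter] at ha ⊢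
        exact ⟨Finset.mem_univ _, smul_ne_zero hlam.2 ha.2⟩
      · intro a1 ha1 a2 ha2 h
        have := congrArg (fun z => lam⁻¹ • z) h
        simpa [smul_smul, inv_mul_cancel₀ hlam.2] using this
      · intro b hb
        rw [Finset.mem_filter] at hb
        refine ⟨lam⁻¹ • b, ?_, ?_⟩
        · rw [Finset.mem_filter]
          exact ⟨Finset.mem_univ _, smul_ne_zero (inv_ne_zero hlam.2) hb.2⟩
        · rw [smul_smul, mul_inv_cancel₀ hlam.2, one_smul]
      · intro a ha
        have heq : (mu * lam⁻¹) • (lam • a) = mu • a := by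
          rw [smul_smul, mul_assoc, inv_mul_cancel₀ hlam.2, mul_one]
        rw [heq]
    have step3 : ∀ lam ∈ univ.filter (fun l : F => l ≠ 0),
        ∑ mu ∈ univ.filter (fun l : F => l ≠ 0), sfun v (mu * lam⁻¹)
          = ∑ nu ∈ univ.filter (fun l : F => l ≠ 0), sfun v nu := by
      intro lam hlam
      rw [Finset.mem_filter] at hlam
      apply Finset.sum_bij (fun mu _ => mu * lam⁻¹)
      · intro a ha
        rw [Finset.mem_filter] at ha ⊢
        exact ⟨Finset.mem_univ _, mul_ne_zero ha.2 (inv_ne_zero hlam.2)⟩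
      · intro a1 _ a2 _ h
        exact mul_right_cancel₀ (inv_ne_zero hlam.2) h
      · intro b hb
        rw [Finset.mem_filter] at hb
        refine ⟨b * lam, Finset.mem_filter.mpr ⟨Finset.mem_univ _, mul_ne_zero hb.2 hlam.2⟩, ?_⟩
        rw [mul_assoc, mul_inv_cancel₀ hlam.2, mul_one]
      · intro a _
        rfl
    calc ∑ y ∈ univ.filter (fun y : Fin d → F => y ≠ 0), (g y)^2
        = ∑ lam ∈ univ.filter (fun l : F => l ≠ 0),
            ∑ mu ∈ univ.filter (fun l : F => l ≠ 0), sfun v (mu * lam⁻¹) := by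
          rw [step1]
          exact Finset.sum_congr rfl fun lam hlam =>
            Finset.sum_congr rfl fun mu hmu => step2 lam hlam mu hmu
      _ = ∑ lam ∈ univ.filter (fun l : F => l ≠ 0),
            ∑ nu ∈ univ.filter (fun l : F => l ≠ 0), sfun v nu :=
          Finset.sum_congr rfl step3
      _ = ((Fintype.card F : ℝ) - 1) * Sv v := by
          rw [Finset.sum_const, Sv_eq_sum_sfun, nsmul_eq_mul]
          congr 1
          rw [Finset.filter_ne']
          rw [Finset.card_erase_of_mem (Finset.mem_univ _), Finset.card_univ]
          have : 1 ≤ Fintype.card F := Fintype.card_pos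
          push_cast [Nat.cast_sub this]
          ring
  have hApos : 0 ≤ ∑ y ∈ univ.filter (fun y : Fin d → F => y ≠ 0), (g y)^2 :=
    Finset.sum_nonneg fun y _ => sq_nonneg _
  rw [hA] at hApos
  have hq1 : 0 < (Fintype.card F : ℝ) - 1 := by
    have := Q_ge_two (F := F)
    linarith
  nlinarith

lemma rel_sum (v : (Fin d → F) → ℝ) :
    ∑ y : Fin d → F, ∑ y' : Fin d → F, (if Rel y y' then (1:ℝ) else 0) * (v y * v y') = Sv v := by
  classical
  rw [← Finset.sum_filter_add_sum_filter_not univ (fun y : Fin d → F => y ≠ 0)]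
  have hzero : ∑ y ∈ univ.filter (fun y : Fin d → F => ¬ y ≠ 0),
      ∑ y' : Fin d → F, (if Rel y y' then (1:ℝ) else 0) * (v y * v y') = 0 := by
    apply Finset.sum_eq_zero
    intro y hy
    rw [Finset.mem_filter] at hy
    apply Finset.sum_eq_zero
    intro y' _
    rw [if_neg, zero_mul]
    intro h
    exact h.1 (not_not.mp hy.2)
  rw [hzero, add_zero]
  unfold Sv
  apply Finset.sum_congr rfl
  intro y hy
  rw [Finset.mem_filter] at hy
  rw [Finset.sum_congr rfl (fun y' (_ : y' ∈ univ) => boole_mul (Rel y y') (v y * v y'))]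
  rw [← Finset.sum_filter]
  refine (Finset.sum_bij
    (fun (lam : F) (_ : lam ∈ univ.filter (fun l : F => l ≠ 0)) => lam • y) ?_ ?_ ?_ ?_).symm
  · intro a ha
    rw [Finset.mem_filter] at ha ⊢
    exact ⟨Finset.mem_univ _, hy.2, a, ha.2, rfl⟩
  · intro a1 ha1 a2 ha2 h
    have h' : a1 • y = a2 • y := h
    have h2 : (a1 - a2) • y = 0 := by rw [sub_smul, h', sub_self]
    rcases smul_eq_zero.mp h2 with h1 | h1
    · exact sub_eq_zero.mp h1
    · exact absurd h1 hy.2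
  · intro b hb
    rw [Finset.mem_filter] at hb
    obtain ⟨hb0, lam, hlam0, rfl⟩ := hb.2
    exact ⟨lam, Finset.mem_filter.mpr ⟨Finset.mem_univ _, hlam0⟩, rfl⟩
  · intro a _
    rfl

lemma ite_comb (c1 c2 c3 : Prop) [Decidable c1] [Decidable c2] [Decidable c3]
    (A B C Z : ℝ) :
    ((if c1 then A else 0) - (if c2 then B else 0) - (if c3 then C else 0)) * Z
      = (if c1 then A * Z else 0) - B * ((if c2 then (1:ℝ) else 0) * Z)
        - (if c3 then C * Z else 0) := by
  by_cases h1 : c1 <;> by_cases h2 : c2 <;> by_cases h3 : c3 <;>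
    simp [h1, h2, h3] <;> ring

lemma Mquad {t : F} (ht : t ≠ 0) (hd : 2 ≤ d) (v : (Fin d → F) → ℝ) :
    ∑ x, ((Mmat t).mulVec v x)^2 ≤ (Fintype.card F : ℝ)^(d-1) * ∑ x, v x ^ 2 := by
  classical
  rw [n2M_expand]
  have hsplit : ∑ y : Fin d → F, ∑ y', cM2 t y y' * (v y * v y')
      = (Fintype.card F : ℝ)^(d-1) * (∑ x, v x ^ 2)
        - (Fintype.card F : ℝ)^(d-2) * Sv v
        - ((Fintype.card F : ℝ)^(d-1) - (Fintype.card F : ℝ)^(d-2)) * (v 0)^2 := by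
    have hpoint : ∀ y y' : Fin d → F, cM2 t y y' * (v y * v y')
        = (if y' = y then (Fintype.card F : ℝ)^(d-1) * (v y * v y') else 0)
          - (Fintype.card F : ℝ)^(d-2) * ((if Rel y y' then (1:ℝ) else 0) * (v y * v y'))
          - (if y = 0 ∧ y' = 0 then
              ((Fintype.card F : ℝ)^(d-1) - (Fintype.card F : ℝ)^(d-2)) * (v y * v y') else 0) := by
      intro y y'
      rw [cM2_eval ht hd y y']
      exact ite_comb _ _ _ _ _ _ _
    rw [Finset.sum_congr rfl (fun y _ => Finset.sum_congr rfl (fun y' _ => hpoint y y'))]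
    have hsum1 : ∑ y : Fin d → F, ∑ y' : Fin d → F,
        (if y' = y then (Fintype.card F : ℝ)^(d-1) * (v y * v y') else 0)
        = (Fintype.card F : ℝ)^(d-1) * ∑ x, v x ^ 2 := by
      rw [Finset.mul_sum]
      apply Finset.sum_congr rfl
      intro y _
      rw [Finset.sum_ite_eq' univ y (fun y' => (Fintype.card F : ℝ)^(d-1) * (v y * v y'))]
      rw [if_pos (Finset.mem_univ _)]
      ring
    have hsum3 : ∑ y : Fin d → F, ∑ y' : Fin d → F,
        (if y = 0 ∧ y' = 0 then
          ((Fintype.card F : ℝ)^(d-1) - (Fintype.card F : ℝ)^(d-2)) * (v y * v y') else 0)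
        = ((Fintype.card F : ℝ)^(d-1) - (Fintype.card F : ℝ)^(d-2)) * (v 0)^2 := by
      have hinner : ∀ y : Fin d → F, ∑ y' : Fin d → F,
          (if y = 0 ∧ y' = 0 then
            ((Fintype.card F : ℝ)^(d-1) - (Fintype.card F : ℝ)^(d-2)) * (v y * v y') else 0)
          = if y = 0 then
              ((Fintype.card F : ℝ)^(d-1) - (Fintype.card F : ℝ)^(d-2)) * (v y * v 0) else 0 := by
        intro y
        by_cases hy : y = 0
        · simp only [hy, true_and]
          rw [Finset.sum_ite_eq' univ (0 : Fin d → F)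
            (fun y' => ((Fintype.card F : ℝ)^(d-1) - (Fintype.card F : ℝ)^(d-2)) * (v 0 * v y'))]
          rw [if_pos (Finset.mem_univ _)]
          simp
        · simp [hy]
      rw [Finset.sum_congr rfl (fun y _ => hinner y)]
      rw [Finset.sum_ite_eq' univ (0 : Fin d → F)
        (fun y => ((Fintype.card F : ℝ)^(d-1) - (Fintype.card F : ℝ)^(d-2)) * (v y * v 0))]
      rw [if_pos (Finset.mem_univ _)]
      ring
    have hsum2 : ∑ y : Fin d → F, ∑ y' : Fin d → F,
        (Fintype.card F : ℝ)^(d-2) * ((if Rel y y' then (1:ℝ) else 0) * (v y * v y'))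
        = (Fintype.card F : ℝ)^(d-2) * Sv v := by
      rw [← rel_sum v, Finset.mul_sum]
      apply Finset.sum_congr rfl
      intro y _
      rw [Finset.mul_sum]
    rw [Finset.sum_congr rfl (fun y (_ : y ∈ univ) => by
      rw [Finset.sum_sub_distrib, Finset.sum_sub_distrib])]
    rw [Finset.sum_sub_distrib, Finset.sum_sub_distrib, hsum1, hsum2, hsum3]
  rw [hsplit]
  have hb : (0:ℝ) ≤ (Fintype.card F : ℝ)^(d-2) := pow_nonneg (le_of_lt Q_pos) _
  have hc : (0:ℝ) ≤ (Fintype.card F : ℝ)^(d-1) - (Fintype.card F : ℝ)^(d-2) := by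
    have := pow_le_pow_right₀ (Q_ge_one (F := F)) (show d-2 ≤ d-1 by omega)
    linarith
  have h1 : 0 ≤ (Fintype.card F : ℝ)^(d-2) * Sv v := mul_nonneg hb (Sv_nonneg v)
  have h2 : 0 ≤ ((Fintype.card F : ℝ)^(d-1) - (Fintype.card F : ℝ)^(d-2)) * (v 0)^2 :=
    mul_nonneg hc (sq_nonneg _)
  linarith


end CCP5

namespace CCP5

variable {F : Type} [Field F] [Fintype F] [DecidableEq F] {d : ℕ}

noncomputable def nrm (v : (Fin d → F) → ℝ) : ℝ := Real.sqrt (∑ x, v x ^ 2)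

lemma nrm_nonneg (v : (Fin d → F) → ℝ) : 0 ≤ nrm v := Real.sqrt_nonneg _

lemma sq_nrm (v : (Fin d → F) → ℝ) : nrm v ^ 2 = ∑ x, v x ^ 2 :=
  Real.sq_sqrt (Finset.sum_nonneg fun x _ => sq_nonneg _)

lemma nrm_le_of_sq_le {v w : (Fin d → F) → ℝ} {c : ℝ} (hc : 0 ≤ c)
    (h : ∑ x, w x ^ 2 ≤ c^2 * ∑ x, v x ^ 2) : nrm w ≤ c * nrm v := by
  have h1 : nrm w ≤ Real.sqrt (c^2 * ∑ x, v x ^ 2) := Real.sqrt_le_sqrt h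
  rwa [Real.sqrt_mul (sq_nonneg c), Real.sqrt_sq hc] at h1

lemma sq_le_of_nrm_le {v w : (Fin d → F) → ℝ} {c : ℝ}
    (h : nrm w ≤ c * nrm v) : ∑ x, w x ^ 2 ≤ c^2 * ∑ x, v x ^ 2 := by
  have h2 : nrm w ^ 2 ≤ (c * nrm v)^2 := by
    apply pow_le_pow_left₀ (nrm_nonneg w) h
  rwa [mul_pow, sq_nrm, sq_nrm] at h2

lemma cs_nrm (u v : (Fin d → F) → ℝ) : |∑ x, u x * v x| ≤ nrm u * nrm v := by
  have h := Finset.sum_mul_sq_le_sq_mul_sq univ u v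
  have h2 : (∑ x, u x * v x)^2 ≤ (nrm u * nrm v)^2 := by
    rw [mul_pow, sq_nrm, sq_nrm]; exact h
  calc |∑ x, u x * v x| = Real.sqrt ((∑ x, u x * v x)^2) := (Real.sqrt_sq_eq_abs _).symm
    _ ≤ Real.sqrt ((nrm u * nrm v)^2) := Real.sqrt_le_sqrt h2
    _ = nrm u * nrm v := Real.sqrt_sq (mul_nonneg (nrm_nonneg u) (nrm_nonneg v))

lemma nrm_add (u v : (Fin d → F) → ℝ) : nrm (u + v) ≤ nrm u + nrm v := by
  have hexp : ∑ x, (u + v) x ^ 2 = (∑ x, u x ^2) + 2 * (∑ x, u x * v x) + ∑ x, v x ^2 := by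
    rw [Finset.mul_sum, ← Finset.sum_add_distrib, ← Finset.sum_add_distrib]
    apply Finset.sum_congr rfl
    intro x _
    simp [Pi.add_apply]
    ring
  have hcs : ∑ x, u x * v x ≤ nrm u * nrm v := le_trans (le_abs_self _) (cs_nrm u v)
  have h2 : ∑ x, (u + v) x ^ 2 ≤ (nrm u + nrm v)^2 := by
    rw [hexp]
    have := sq_nrm u; have := sq_nrm v
    nlinarith [sq_nrm u, sq_nrm v]
  calc nrm (u + v) = Real.sqrt (∑ x, (u+v) x ^2) := rfl
    _ ≤ Real.sqrt ((nrm u + nrm v)^2) := Real.sqrt_le_sqrt h2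
    _ = nrm u + nrm v := Real.sqrt_sq (add_nonneg (nrm_nonneg u) (nrm_nonneg v))

lemma nrm_smul (c : ℝ) (v : (Fin d → F) → ℝ) : nrm (c • v) = |c| * nrm v := by
  unfold nrm
  rw [show ∑ x, (c • v) x ^2 = c^2 * ∑ x, v x ^2 by
    rw [Finset.mul_sum]; exact Finset.sum_congr rfl fun x _ => by simp [mul_pow]]
  rw [Real.sqrt_mul (sq_nonneg c), Real.sqrt_sq_eq_abs]

/-- operator norm bound predicate -/
def OpB (X : Matrix (Fin d → F) (Fin d → F) ℝ) (c : ℝ) : Prop :=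
  0 ≤ c ∧ ∀ v, nrm (X.mulVec v) ≤ c * nrm v

lemma OpB.mul {X Y : Matrix (Fin d → F) (Fin d → F) ℝ} {c c' : ℝ}
    (hX : OpB X c) (hY : OpB Y c') : OpB (X * Y) (c * c') := by
  refine ⟨mul_nonneg hX.1 hY.1, fun v => ?_⟩
  rw [← Matrix.mulVec_mulVec]
  calc nrm (X.mulVec (Y.mulVec v)) ≤ c * nrm (Y.mulVec v) := hX.2 _
    _ ≤ c * (c' * nrm v) := by
        apply mul_le_mul_of_nonneg_left (hY.2 v) hX.1
    _ = c * c' * nrm v := by ring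

lemma OpB.add {X Y : Matrix (Fin d → F) (Fin d → F) ℝ} {c c' : ℝ}
    (hX : OpB X c) (hY : OpB Y c') : OpB (X + Y) (c + c') := by
  refine ⟨add_nonneg hX.1 hY.1, fun v => ?_⟩
  rw [Matrix.add_mulVec]
  calc nrm (X.mulVec v + Y.mulVec v) ≤ nrm (X.mulVec v) + nrm (Y.mulVec v) := nrm_add _ _
    _ ≤ c * nrm v + c' * nrm v := add_le_add (hX.2 v) (hY.2 v)
    _ = (c + c') * nrm v := by ring

end CCP5

/-- the operator bound for M -/
noncomputable def CCP5.muF (K : Type) [Fintype K] (n : ℕ) : ℝ :=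
  Real.sqrt ((Fintype.card K : ℝ)^(n-1))

namespace CCP5

variable {F : Type} [Field F] [Fintype F] [DecidableEq F] {d : ℕ}

lemma muF_nonneg : 0 ≤ muF F d := Real.sqrt_nonneg _

lemma OpB_M {t : F} (ht : t ≠ 0) (hd : 2 ≤ d) : OpB (Mmat (d := d) t) (muF F d) := by
  refine ⟨muF_nonneg, fun v => ?_⟩
  apply nrm_le_of_sq_le muF_nonneg
  rw [show muF F d ^ 2 = (Fintype.card F : ℝ)^(d-1) from
    Real.sq_sqrt (pow_nonneg (le_of_lt Q_pos) _)]
  exact Mquad ht hd v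

end CCP5

namespace CCP5

variable {F : Type} [Field F] [Fintype F] [DecidableEq F] {d : ℕ}

noncomputable def indE (E : Finset (Fin d → F)) : (Fin d → F) → ℝ :=
  fun x => if x ∈ E then 1 else 0

noncomputable def Dm (E : Finset (Fin d → F)) : Matrix (Fin d → F) (Fin d → F) ℝ :=
  Matrix.diagonal (indE E)

noncomputable def Jhat (E : Finset (Fin d → F)) : Matrix (Fin d → F) (Fin d → F) ℝ :=
  (Fintype.card F : ℝ)⁻¹ • Matrix.vecMulVec (indE E) (indE E)

noncomputable def Mh (t : F) (E : Finset (Fin d → F)) : Matrix (Fin d → F) (Fin d → F) ℝ :=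
  Dm E * Mmat t * Dm E

lemma indE_sq (E : Finset (Fin d → F)) (x : Fin d → F) : indE E x ^ 2 = indE E x := by
  unfold indE; by_cases h : x ∈ E <;> simp [h]

lemma indE_nonneg (E : Finset (Fin d → F)) (x : Fin d → F) : 0 ≤ indE E x := by
  unfold indE; by_cases h : x ∈ E <;> simp [h]

lemma indE_le_one (E : Finset (Fin d → F)) (x : Fin d → F) : indE E x ≤ 1 := by
  unfold indE; by_cases h : x ∈ E <;> simp [h]

lemma sum_indE (E : Finset (Fin d → F)) : ∑ x, indE E x = (E.card : ℝ) := by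
  unfold indE
  rw [Finset.sum_boole]
  congr 1
  rw [Finset.filter_mem_eq_inter, Finset.univ_inter]

lemma sum_indE_sq (E : Finset (Fin d → F)) : ∑ x, indE E x ^ 2 = (E.card : ℝ) := by
  rw [Finset.sum_congr rfl (fun x (_ : x ∈ univ) => indE_sq E x), sum_indE]

lemma nrm_indE (E : Finset (Fin d → F)) : nrm (indE E) = Real.sqrt (E.card : ℝ) := by
  unfold nrm; rw [sum_indE_sq]

lemma OpB_D (E : Finset (Fin d → F)) : OpB (Dm E) 1 := by
  refine ⟨zero_le_one, fun v => ?_⟩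
  apply nrm_le_of_sq_le zero_le_one
  rw [one_pow, one_mul]
  apply Finset.sum_le_sum
  intro x _
  rw [show (Dm E).mulVec v x = indE E x * v x from by
    unfold Dm; rw [Matrix.mulVec_diagonal]]
  calc (indE E x * v x)^2 = indE E x ^2 * v x^2 := by ring
    _ ≤ 1 * v x ^2 := by
        apply mul_le_mul_of_nonneg_right _ (sq_nonneg _)
        rw [indE_sq]; exact indE_le_one E x
    _ = v x ^2 := one_mul _

lemma vv_mulVec (u v : (Fin d → F) → ℝ) :
    (Matrix.vecMulVec u u).mulVec v = (∑ y, u y * v y) • u := by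
  funext x
  show ∑ y, Matrix.vecMulVec u u x y * v y = ((∑ y, u y * v y) • u) x
  rw [Pi.smul_apply, smul_eq_mul, Finset.sum_mul]
  apply Finset.sum_congr rfl
  intro y _
  rw [Matrix.vecMulVec_apply]
  ring

lemma OpB_J (E : Finset (Fin d → F)) :
    OpB (Jhat E) ((E.card : ℝ) / (Fintype.card F : ℝ)) := by
  have hc : 0 ≤ (E.card : ℝ) / (Fintype.card F : ℝ) :=
    div_nonneg (Nat.cast_nonneg _) (le_of_lt Q_pos)
  refine ⟨hc, fun v => ?_⟩
  unfold Jhat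
  rw [Matrix.smul_mulVec, vv_mulVec, nrm_smul, nrm_smul]
  have h1 : |(Fintype.card F : ℝ)⁻¹| = (Fintype.card F : ℝ)⁻¹ :=
    abs_of_nonneg (inv_nonneg.mpr (le_of_lt Q_pos))
  rw [h1, nrm_indE]
  have h2 : |∑ y, indE E y * v y| ≤ Real.sqrt (E.card : ℝ) * nrm v := by
    have := cs_nrm (indE E) v
    rwa [nrm_indE] at this
  calc (Fintype.card F : ℝ)⁻¹ * (|∑ y, indE E y * v y| * Real.sqrt (E.card : ℝ))
      ≤ (Fintype.card F : ℝ)⁻¹ * ((Real.sqrt (E.card : ℝ) * nrm v) * Real.sqrt (E.card : ℝ)) := by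
        apply mul_le_mul_of_nonneg_left _ (inv_nonneg.mpr (le_of_lt Q_pos))
        apply mul_le_mul_of_nonneg_right h2 (Real.sqrt_nonneg _)
    _ = (Fintype.card F : ℝ)⁻¹ * (Real.sqrt (E.card : ℝ) * Real.sqrt (E.card : ℝ)) * nrm v := by
        ring
    _ = (E.card : ℝ) / (Fintype.card F : ℝ) * nrm v := by
        rw [Real.mul_self_sqrt (Nat.cast_nonneg _)]
        ring

lemma OpB.weaken {X : Matrix (Fin d → F) (Fin d → F) ℝ} {c c' : ℝ}
    (h : OpB X c) (hcc : c ≤ c') : OpB X c' :=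
  ⟨le_trans h.1 hcc, fun v => le_trans (h.2 v)
    (mul_le_mul_of_nonneg_right hcc (nrm_nonneg v))⟩

lemma OpB_Mh {t : F} (ht : t ≠ 0) (hd : 2 ≤ d) (E : Finset (Fin d → F)) :
    OpB (Mh t E) (muF F d) := by
  have h := ((OpB_D E).mul (OpB_M ht hd)).mul (OpB_D E)
  have : (1 * muF F d) * 1 = muF F d := by ring
  rw [this] at h
  exact h

lemma vv_mul_vv (E : Finset (Fin d → F)) :
    Matrix.vecMulVec (indE E) (indE E) * Matrix.vecMulVec (indE E) (indE E)
      = (E.card : ℝ) • Matrix.vecMulVec (indE E) (indE E) := by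
  ext a c
  rw [Matrix.mul_apply, Matrix.smul_apply, Matrix.vecMulVec_apply, smul_eq_mul]
  calc ∑ b, Matrix.vecMulVec (indE E) (indE E) a b * Matrix.vecMulVec (indE E) (indE E) b c
      = ∑ b, (indE E a * indE E c) * indE E b ^2 := by
        apply Finset.sum_congr rfl
        intro b _
        rw [Matrix.vecMulVec_apply, Matrix.vecMulVec_apply]
        ring
    _ = (indE E a * indE E c) * (E.card : ℝ) := by
        rw [← Finset.mul_sum, sum_indE_sq]
    _ = (E.card : ℝ) * (indE E a * indE E c) := by ring

lemma Jhat_sq (E : Finset (Fin d → F)) :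
    Jhat E * Jhat E = ((E.card : ℝ) / (Fintype.card F : ℝ)) • Jhat E := by
  unfold Jhat
  rw [Matrix.smul_mul, Matrix.mul_smul, vv_mul_vv, smul_smul, smul_smul, smul_smul]
  congr 1
  field_simp

lemma Jhat_pow (E : Finset (Fin d → F)) :
    ∀ k : ℕ, Jhat E ^ (k+1) = (((E.card : ℝ) / (Fintype.card F : ℝ))^k) • Jhat E := by
  intro k
  induction k with
  | zero => simp
  | succ n ih =>
    rw [pow_succ, ih, Matrix.smul_mul, Jhat_sq, smul_smul, ← pow_succ]

lemma trace_Jhat (E : Finset (Fin d → F)) :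
    (Jhat E).trace = (E.card : ℝ) / (Fintype.card F : ℝ) := by
  unfold Jhat
  rw [Matrix.trace_smul]
  have : (Matrix.vecMulVec (indE E) (indE E)).trace = (E.card : ℝ) := by
    unfold Matrix.trace
    calc ∑ x, (Matrix.vecMulVec (indE E) (indE E)).diag x
        = ∑ x, indE E x ^ 2 := by
          apply Finset.sum_congr rfl
          intro x _
          rw [Matrix.diag_apply, Matrix.vecMulVec_apply, sq]
      _ = (E.card : ℝ) := sum_indE_sq E
  rw [this, smul_eq_mul]
  ring

lemma trace_Jhat_five (E : Finset (Fin d → F)) :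
    (Jhat E ^ 5).trace = (E.card : ℝ)^5 / (Fintype.card F : ℝ)^5 := by
  rw [show (5:ℕ) = 4+1 from rfl, Jhat_pow E 4, Matrix.trace_smul, trace_Jhat, smul_eq_mul]
  field_simp
  ring

lemma tr_mul_vv (Z : Matrix (Fin d → F) (Fin d → F) ℝ) (u : (Fin d → F) → ℝ) :
    (Z * Matrix.vecMulVec u u).trace = ∑ x, (Z.mulVec u) x * u x := by
  unfold Matrix.trace
  apply Finset.sum_congr rfl
  intro a _
  rw [Matrix.diag_apply, Matrix.mul_apply]
  show _ = (∑ y, Z a y * u y) * u a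
  rw [Finset.sum_mul]
  apply Finset.sum_congr rfl
  intro b _
  rw [Matrix.vecMulVec_apply]
  ring

lemma tr_sandwich {Z : Matrix (Fin d → F) (Fin d → F) ℝ} {c : ℝ}
    (h : OpB Z c) (E : Finset (Fin d → F)) :
    |(Z * Jhat E).trace| ≤ c * (E.card : ℝ) / (Fintype.card F : ℝ) := by
  unfold Jhat
  rw [Matrix.mul_smul, Matrix.trace_smul, smul_eq_mul, tr_mul_vv, abs_mul]
  have h1 : |(Fintype.card F : ℝ)⁻¹| = (Fintype.card F : ℝ)⁻¹ :=
    abs_of_nonneg (inv_nonneg.mpr (le_of_lt Q_pos))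
  rw [h1]
  have h2 : |∑ x, (Z.mulVec (indE E)) x * indE E x| ≤ c * (E.card : ℝ) := by
    calc |∑ x, (Z.mulVec (indE E)) x * indE E x|
        ≤ nrm (Z.mulVec (indE E)) * nrm (indE E) := cs_nrm _ _
      _ ≤ (c * nrm (indE E)) * nrm (indE E) := by
          apply mul_le_mul_of_nonneg_right (h.2 _) (nrm_nonneg _)
      _ = c * (nrm (indE E) * nrm (indE E)) := by ring
      _ = c * (E.card : ℝ) := by
          rw [nrm_indE, Real.mul_self_sqrt (Nat.cast_nonneg _)]
  calc (Fintype.card F : ℝ)⁻¹ * |∑ x, (Z.mulVec (indE E)) x * indE E x|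
      ≤ (Fintype.card F : ℝ)⁻¹ * (c * (E.card : ℝ)) := by
        apply mul_le_mul_of_nonneg_left h2 (inv_nonneg.mpr (le_of_lt Q_pos))
    _ = c * (E.card : ℝ) / (Fintype.card F : ℝ) := by ring

noncomputable def frob (X : Matrix (Fin d → F) (Fin d → F) ℝ) : ℝ := ∑ x, ∑ y, X x y ^ 2

lemma frob_nonneg (X : Matrix (Fin d → F) (Fin d → F) ℝ) : 0 ≤ frob X :=
  Finset.sum_nonneg fun x _ => Finset.sum_nonneg fun y _ => sq_nonneg _

lemma tr_mul_abs_le (X Y : Matrix (Fin d → F) (Fin d → F) ℝ) :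
    |(X * Y).trace| ≤ Real.sqrt (frob X) * Real.sqrt (frob Y) := by
  have htr : (X * Y).trace = ∑ p : (Fin d → F) × (Fin d → F), X p.1 p.2 * Y p.2 p.1 := by
    rw [Fintype.sum_prod_type]
    unfold Matrix.trace
    apply Finset.sum_congr rfl
    intro a _
    rw [Matrix.diag_apply, Matrix.mul_apply]
  have hf : ∑ p : (Fin d → F) × (Fin d → F), (X p.1 p.2)^2 = frob X := by
    rw [Fintype.sum_prod_type]; rfl
  have hg : ∑ p : (Fin d → F) × (Fin d → F), (Y p.2 p.1)^2 = frob Y := by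
    rw [Fintype.sum_prod_type]
    unfold frob
    rw [Finset.sum_comm]
  have h := Finset.sum_mul_sq_le_sq_mul_sq univ
    (fun p : (Fin d → F) × (Fin d → F) => X p.1 p.2)
    (fun p : (Fin d → F) × (Fin d → F) => Y p.2 p.1)
  rw [htr]
  calc |∑ p : (Fin d → F) × (Fin d → F), X p.1 p.2 * Y p.2 p.1|
      = Real.sqrt ((∑ p : (Fin d → F) × (Fin d → F), X p.1 p.2 * Y p.2 p.1)^2) :=
        (Real.sqrt_sq_eq_abs _).symm
    _ ≤ Real.sqrt (frob X * frob Y) := by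
        apply Real.sqrt_le_sqrt
        rw [← hf, ← hg]
        exact h
    _ = Real.sqrt (frob X) * Real.sqrt (frob Y) :=
        Real.sqrt_mul (frob_nonneg X) _

lemma frob_mul_le {X : Matrix (Fin d → F) (Fin d → F) ℝ} {c : ℝ}
    (h : OpB X c) (Y : Matrix (Fin d → F) (Fin d → F) ℝ) :
    frob (X * Y) ≤ c^2 * frob Y := by
  unfold frob
  rw [Finset.sum_comm]
  have hcol : ∀ y, ∑ x, ((X * Y) x y)^2 ≤ c^2 * ∑ b, (Y b y)^2 := by
    intro y
    have hv : ∀ x, (X * Y) x y = (X.mulVec (fun b => Y b y)) x := by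
      intro x
      rw [Matrix.mul_apply]
      rfl
    rw [Finset.sum_congr rfl (fun x (_ : x ∈ univ) => by rw [hv x])]
    exact sq_le_of_nrm_le (h.2 (fun b => Y b y))
  calc ∑ y, ∑ x, ((X * Y) x y)^2 ≤ ∑ y, c^2 * ∑ b, (Y b y)^2 :=
        Finset.sum_le_sum fun y _ => hcol y
    _ = c^2 * ∑ y, ∑ b, (Y b y)^2 := by rw [Finset.mul_sum]
    _ = c^2 * ∑ b, ∑ y, (Y b y)^2 := by rw [Finset.sum_comm]

lemma Mmat_symm (t : F) (x y : Fin d → F) : Mmat t x y = Mmat t y x := by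
  rw [Mmat_apply, Mmat_apply, Amat_apply, Amat_apply, dotF_comm]

lemma Mh_apply (t : F) (E : Finset (Fin d → F)) (x y : Fin d → F) :
    Mh t E x y = indE E x * Mmat t x y * indE E y := by
  unfold Mh Dm
  rw [Matrix.mul_diagonal, Matrix.diagonal_mul]

lemma Mh_symm (t : F) (E : Finset (Fin d → F)) (x y : Fin d → F) :
    Mh t E x y = Mh t E y x := by
  rw [Mh_apply, Mh_apply, Mmat_symm]
  ring

lemma trace_Mh_sq (t : F) (E : Finset (Fin d → F)) :
    (Mh t E * Mh t E).trace = frob (Mh t E) := by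
  unfold Matrix.trace frob
  apply Finset.sum_congr rfl
  intro a _
  rw [Matrix.diag_apply, Matrix.mul_apply]
  apply Finset.sum_congr rfl
  intro b _
  rw [sq, Mh_symm t E b a]

end CCP5

namespace CCP5

variable {F : Type} [Field F] [Fintype F] [DecidableEq F] {d : ℕ}

lemma tr_Mh_five {t : F} (ht : t ≠ 0) (hd : 2 ≤ d) (E : Finset (Fin d → F)) :
    |(Mh t E ^ 5).trace| ≤ (muF F d)^3 * frob (Mh t E) := by
  set B := Mh t E with hB
  set mu := muF F d with hmu
  have hOp : OpB B mu := OpB_Mh ht hd E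
  have h5 : B^5 = (B*B) * (B*(B*B)) := by
    rw [pow_succ, pow_succ, pow_succ, pow_succ, pow_one]
    simp only [Matrix.mul_assoc]
  have hf3 : frob (B*(B*B)) ≤ mu^2 * frob (B*B) := frob_mul_le hOp (B*B)
  have hf2 : frob (B*B) ≤ mu^2 * frob B := frob_mul_le hOp B
  have hmain : |(B^5).trace| ≤ Real.sqrt (frob (B*B)) * Real.sqrt (frob (B*(B*B))) := by
    rw [h5]; exact tr_mul_abs_le _ _
  have hstep : Real.sqrt (frob (B*(B*B))) ≤ mu * Real.sqrt (frob (B*B)) := by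
    calc Real.sqrt (frob (B*(B*B))) ≤ Real.sqrt (mu^2 * frob (B*B)) := Real.sqrt_le_sqrt hf3
      _ = mu * Real.sqrt (frob (B*B)) := by
          rw [Real.sqrt_mul (sq_nonneg mu), Real.sqrt_sq (muF_nonneg)]
  calc |(B^5).trace| ≤ Real.sqrt (frob (B*B)) * Real.sqrt (frob (B*(B*B))) := hmain
    _ ≤ Real.sqrt (frob (B*B)) * (mu * Real.sqrt (frob (B*B))) := by
        apply mul_le_mul_of_nonneg_left hstep (Real.sqrt_nonneg _)
    _ = mu * (Real.sqrt (frob (B*B)) * Real.sqrt (frob (B*B))) := by ring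
    _ = mu * frob (B*B) := by rw [Real.mul_self_sqrt (frob_nonneg _)]
    _ ≤ mu * (mu^2 * frob B) := by
        apply mul_le_mul_of_nonneg_left hf2 muF_nonneg
    _ = mu^3 * frob B := by ring

lemma double_sum_mul (u : (Fin d → F) → ℝ) (c : ℝ) :
    ∑ x, ∑ y, c * (u x * u y) = c * ((∑ x, u x) * (∑ x, u x)) := by
  rw [Finset.sum_mul_sum, Finset.mul_sum]
  apply Finset.sum_congr rfl
  intro x _
  rw [Finset.mul_sum]

lemma Msq_le (t : F) (x y : Fin d → F) :
    (Mmat t x y)^2 ≤ Amat t x y + ((Fintype.card F : ℝ)⁻¹)^2 := by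
  have hQi : 0 ≤ (Fintype.card F : ℝ)⁻¹ := inv_nonneg.mpr (le_of_lt Q_pos)
  rw [Mmat_apply, Amat_apply]
  by_cases h : dotF x y = t
  · rw [if_pos h]
    nlinarith
  · rw [if_neg h]
    nlinarith

lemma frob_Mh_le {t : F} (ht : t ≠ 0) (hd : 2 ≤ d) (E : Finset (Fin d → F)) :
    frob (Mh t E) ≤ muF F d * (E.card : ℝ)
      + (E.card : ℝ)^2 / (Fintype.card F : ℝ)
      + (E.card : ℝ)^2 / (Fintype.card F : ℝ)^2 := by
  have hQi : 0 ≤ (Fintype.card F : ℝ)⁻¹ := inv_nonneg.mpr (le_of_lt Q_pos)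
  have step1 : frob (Mh t E) ≤
      (∑ x, ∑ y, indE E x * Amat t x y * indE E y)
      + ((Fintype.card F : ℝ)⁻¹)^2 * (E.card : ℝ)^2 := by
    unfold frob
    have hpt : ∀ x y : Fin d → F, (Mh t E x y)^2
        ≤ indE E x * Amat t x y * indE E y
          + ((Fintype.card F : ℝ)⁻¹)^2 * (indE E x * indE E y) := by
      intro x y
      rw [Mh_apply]
      have h1 : (indE E x * Mmat t x y * indE E y)^2
          = (indE E x * indE E y) * (Mmat t x y)^2 := by
        rw [show (indE E x * Mmat t x y * indE E y)^2
          = indE E x^2 * indE E y^2 * (Mmat t x y)^2 from by ring, indE_sq, indE_sq]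
      rw [h1]
      have h2 : (indE E x * indE E y) * (Mmat t x y)^2
          ≤ (indE E x * indE E y) * (Amat t x y + ((Fintype.card F : ℝ)⁻¹)^2) := by
        apply mul_le_mul_of_nonneg_left (Msq_le t x y)
          (mul_nonneg (indE_nonneg E x) (indE_nonneg E y))
      calc (indE E x * indE E y) * (Mmat t x y)^2
          ≤ (indE E x * indE E y) * (Amat t x y + ((Fintype.card F : ℝ)⁻¹)^2) := h2
        _ = indE E x * Amat t x y * indE E y
            + ((Fintype.card F : ℝ)⁻¹)^2 * (indE E x * indE E y) := by ring
    calc ∑ x, ∑ y, (Mh t E x y)^2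
        ≤ ∑ x, ∑ y, (indE E x * Amat t x y * indE E y
            + ((Fintype.card F : ℝ)⁻¹)^2 * (indE E x * indE E y)) :=
          Finset.sum_le_sum fun x _ => Finset.sum_le_sum fun y _ => hpt x y
      _ = (∑ x, ∑ y, indE E x * Amat t x y * indE E y)
          + ((Fintype.card F : ℝ)⁻¹)^2 * (E.card : ℝ)^2 := by
          rw [Finset.sum_congr rfl (fun x (_ : x ∈ univ) => Finset.sum_add_distrib),
            Finset.sum_add_distrib]
          congr 1
          rw [double_sum_mul (indE E) (((Fintype.card F : ℝ)⁻¹)^2), sum_indE]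
          ring
  have step2 : ∑ x, ∑ y, indE E x * Amat t x y * indE E y
      ≤ muF F d * (E.card : ℝ) + (E.card : ℝ)^2 / (Fintype.card F : ℝ) := by
    have hsplit : ∑ x, ∑ y, indE E x * Amat t x y * indE E y
        = (∑ x, indE E x * ((Mmat t).mulVec (indE E)) x)
          + (Fintype.card F : ℝ)⁻¹ * (E.card : ℝ)^2 := by
      have hpt : ∀ x : Fin d → F, ∑ y, indE E x * Amat t x y * indE E y
          = indE E x * ((Mmat t).mulVec (indE E)) x
            + (Fintype.card F : ℝ)⁻¹ * (indE E x * ∑ y, indE E y) := by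
        intro x
        have hmv : ((Mmat t).mulVec (indE E)) x = ∑ y, Mmat t x y * indE E y := rfl
        rw [hmv, Finset.mul_sum, Finset.mul_sum, Finset.mul_sum, ← Finset.sum_add_distrib]
        apply Finset.sum_congr rfl
        intro y _
        rw [Mmat_apply]
        ring
      rw [Finset.sum_congr rfl (fun x (_ : x ∈ univ) => hpt x), Finset.sum_add_distrib]
      congr 1
      rw [show ∑ x, (Fintype.card F : ℝ)⁻¹ * (indE E x * ∑ y, indE E y)
        = (Fintype.card F : ℝ)⁻¹ * ((∑ x, indE E x) * (∑ y, indE E y)) from by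
          rw [Finset.sum_mul, Finset.mul_sum], sum_indE]
      ring
    rw [hsplit]
    have hcs : ∑ x, indE E x * ((Mmat t).mulVec (indE E)) x ≤ muF F d * (E.card : ℝ) := by
      calc ∑ x, indE E x * ((Mmat t).mulVec (indE E)) x
          ≤ |∑ x, indE E x * ((Mmat t).mulVec (indE E)) x| := le_abs_self _
        _ ≤ nrm (indE E) * nrm ((Mmat t).mulVec (indE E)) := cs_nrm _ _
        _ ≤ nrm (indE E) * (muF F d * nrm (indE E)) := by
            apply mul_le_mul_of_nonneg_left ((OpB_M ht hd).2 _) (nrm_nonneg _)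
        _ = muF F d * (nrm (indE E) * nrm (indE E)) := by ring
        _ = muF F d * (E.card : ℝ) := by
            rw [nrm_indE, Real.mul_self_sqrt (Nat.cast_nonneg _)]
    have : (Fintype.card F : ℝ)⁻¹ * (E.card : ℝ)^2 = (E.card : ℝ)^2 / (Fintype.card F : ℝ) := by
      ring
    linarith
  have : ((Fintype.card F : ℝ)⁻¹)^2 * (E.card : ℝ)^2
      = (E.card : ℝ)^2 / (Fintype.card F : ℝ)^2 := by
    field_simp
  linarith

end CCP5

def CCP5.eqv5 (α : Type) : (Fin 5 → α) ≃ (α × α × α × α × α) where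
  toFun x := (x 0, x 1, x 2, x 3, x 4)
  invFun p := ![p.1, p.2.1, p.2.2.1, p.2.2.2.1, p.2.2.2.2]
  left_inv x := by
    funext i
    fin_cases i <;> rfl
  right_inv p := rfl

namespace CCP5

variable {F : Type} [Field F] [Fintype F] [DecidableEq F] {d : ℕ}

noncomputable def Bb (t : F) (E : Finset (Fin d → F)) (a b : Fin d → F) : ℝ :=
  if (a ∈ E ∧ b ∈ E ∧ dotF a b = t) then 1 else 0

lemma Bb_eq_entry (t : F) (E : Finset (Fin d → F)) (a b : Fin d → F) :
    ((Dm E * Amat t * Dm E : Matrix (Fin d → F) (Fin d → F) ℝ)) a b = Bb t E a b := by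
  have h : ((Dm E * Amat t * Dm E : Matrix (Fin d → F) (Fin d → F) ℝ)) a b
      = indE E a * Amat t a b * indE E b := by
    unfold Dm
    rw [Matrix.mul_diagonal, Matrix.diagonal_mul]
  rw [h]
  unfold Bb indE
  rw [Amat_apply]
  by_cases ha : a ∈ E <;> by_cases hb : b ∈ E <;> by_cases hab : dotF a b = t <;>
    simp [ha, hb, hab]

lemma trace_pow_five_eq (B : Matrix (Fin d → F) (Fin d → F) ℝ) :
    (B^5).trace = ∑ x0, ∑ x1, ∑ x2, ∑ x3, ∑ x4,
      B x0 x1 * (B x1 x2 * (B x2 x3 * (B x3 x4 * B x4 x0))) := by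
  rw [show B^5 = B*(B*(B*(B*B))) from by
    rw [pow_succ, pow_succ, pow_succ, pow_succ, pow_one]
    simp only [Matrix.mul_assoc]]
  unfold Matrix.trace
  simp only [Matrix.diag_apply, Matrix.mul_apply, Finset.mul_sum]

lemma sum_pi_five (g : (Fin d → F) → (Fin d → F) → ℝ) :
    ∑ x : Fin 5 → (Fin d → F),
        (g (x 0) (x 1) * (g (x 1) (x 2) * (g (x 2) (x 3) * (g (x 3) (x 4) * g (x 4) (x 0)))))
      = ∑ a0, ∑ a1, ∑ a2, ∑ a3, ∑ a4,
          g a0 a1 * (g a1 a2 * (g a2 a3 * (g a3 a4 * g a4 a0))) := by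
  rw [← Equiv.sum_comp (eqv5 (Fin d → F)).symm
    (fun x : Fin 5 → (Fin d → F) =>
      g (x 0) (x 1) * (g (x 1) (x 2) * (g (x 2) (x 3) * (g (x 3) (x 4) * g (x 4) (x 0)))))]
  simp only [Fintype.sum_prod_type]
  rfl

lemma pointwise_ite (t : F) (E : Finset (Fin d → F)) (x : Fin 5 → (Fin d → F)) :
    (if ((∀ i, x i ∈ E) ∧
        ∀ i : Fin 5, ∑ j, x i j * x ⟨(i.val + 1) % 5, Nat.mod_lt _ i.pos⟩ j = t)
      then (1:ℝ) else 0)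
    = Bb t E (x 0) (x 1) * (Bb t E (x 1) (x 2) * (Bb t E (x 2) (x 3)
        * (Bb t E (x 3) (x 4) * Bb t E (x 4) (x 0)))) := by
  by_cases h : ((∀ i, x i ∈ E) ∧
      ∀ i : Fin 5, ∑ j, x i j * x ⟨(i.val + 1) % 5, Nat.mod_lt _ i.pos⟩ j = t)
  · rw [if_pos h]
    obtain ⟨hE, hedge⟩ := h
    have b01 : Bb t E (x 0) (x 1) = 1 := if_pos ⟨hE 0, hE 1, hedge 0⟩
    have b12 : Bb t E (x 1) (x 2) = 1 := if_pos ⟨hE 1, hE 2, hedge 1⟩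
    have b23 : Bb t E (x 2) (x 3) = 1 := if_pos ⟨hE 2, hE 3, hedge 2⟩
    have b34 : Bb t E (x 3) (x 4) = 1 := if_pos ⟨hE 3, hE 4, hedge 3⟩
    have b40 : Bb t E (x 4) (x 0) = 1 := if_pos ⟨hE 4, hE 0, hedge 4⟩
    rw [b01, b12, b23, b34, b40]
    norm_num
  · rw [if_neg h]
    by_cases c0 : (x 0 ∈ E ∧ x 1 ∈ E ∧ dotF (x 0) (x 1) = t)
    · by_cases c1 : (x 1 ∈ E ∧ x 2 ∈ E ∧ dotF (x 1) (x 2) = t)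
      · by_cases c2 : (x 2 ∈ E ∧ x 3 ∈ E ∧ dotF (x 2) (x 3) = t)
        · by_cases c3 : (x 3 ∈ E ∧ x 4 ∈ E ∧ dotF (x 3) (x 4) = t)
          · by_cases c4 : (x 4 ∈ E ∧ x 0 ∈ E ∧ dotF (x 4) (x 0) = t)
            · exfalso
              apply h
              constructor
              · intro i
                fin_cases i
                exacts [c0.1, c1.1, c2.1, c3.1, c4.1]
              · intro i
                fin_cases i
                exacts [c0.2.2, c1.2.2, c2.2.2, c3.2.2, c4.2.2]
            · rw [show Bb t E (x 4) (x 0) = 0 from if_neg c4]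
              ring
          · rw [show Bb t E (x 3) (x 4) = 0 from if_neg c3]
            ring
        · rw [show Bb t E (x 2) (x 3) = 0 from if_neg c2]
          ring
      · rw [show Bb t E (x 1) (x 2) = 0 from if_neg c1]
        ring
    · rw [show Bb t E (x 0) (x 1) = 0 from if_neg c0]
      ring

end CCP5

namespace CCP5

variable {F : Type} [Field F] [Fintype F] [DecidableEq F] {d : ℕ}

lemma OpB.pow' {X : Matrix (Fin d → F) (Fin d → F) ℝ} {c : ℝ} (h : OpB X c) :
    ∀ k : ℕ, OpB (X^(k+1)) (c^(k+1)) := by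
  intro k
  induction k with
  | zero => simpa using h
  | succ n ih =>
    rw [pow_succ, pow_succ]
    exact ih.mul h

lemma B_decomp (t : F) (E : Finset (Fin d → F)) :
    Dm E * Amat t * Dm E = Jhat E + Mh t E := by
  ext a b
  rw [Matrix.add_apply, Bb_eq_entry, Mh_apply]
  unfold Jhat Bb
  rw [Matrix.smul_apply, Matrix.vecMulVec_apply, smul_eq_mul, Mmat_apply, Amat_apply]
  unfold indE
  by_cases ha : a ∈ E <;> by_cases hb : b ∈ E <;> by_cases hab : dotF a b = t <;>
    simp [ha, hb, hab]

lemma telescope (J M : Matrix (Fin d → F) (Fin d → F) ℝ) :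
    (J + M)^5 = J^5
      + ((J+M)^3*M*J + (J+M)^2*M*J^2 + (J+M)*M*J^3 + M*J^4)
      + ((J+M)^3*J*M + (J+M)^2*J*M^2 + (J+M)*J*M^3 + J*M^4)
      + M^5 := by
  noncomm_ring

lemma tr_sandwich' {Z : Matrix (Fin d → F) (Fin d → F) ℝ} {c : ℝ}
    (h : OpB Z c) (E : Finset (Fin d → F)) :
    |(Z * Jhat E).trace| ≤ c * ((E.card : ℝ) / (Fintype.card F : ℝ)) := by
  have := tr_sandwich h E
  rwa [mul_div_assoc] at this

lemma tr_sandwich_pow {Z : Matrix (Fin d → F) (Fin d → F) ℝ} {c : ℝ}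
    (h : OpB Z c) (E : Finset (Fin d → F)) (k : ℕ) :
    |(Z * Jhat E ^ (k+1)).trace|
      ≤ c * ((E.card : ℝ) / (Fintype.card F : ℝ))^k
          * ((E.card : ℝ) / (Fintype.card F : ℝ)) := by
  have her : 0 ≤ (E.card : ℝ) / (Fintype.card F : ℝ) :=
    div_nonneg (Nat.cast_nonneg _) (le_of_lt Q_pos)
  rw [Jhat_pow E k, Matrix.mul_smul, Matrix.trace_smul, smul_eq_mul, abs_mul,
    abs_of_nonneg (pow_nonneg her k)]
  calc ((E.card : ℝ) / (Fintype.card F : ℝ))^k * |(Z * Jhat E).trace|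
      ≤ ((E.card : ℝ) / (Fintype.card F : ℝ))^k
          * (c * ((E.card : ℝ) / (Fintype.card F : ℝ))) := by
        apply mul_le_mul_of_nonneg_left (tr_sandwich' h E) (pow_nonneg her k)
    _ = c * ((E.card : ℝ) / (Fintype.card F : ℝ))^k
          * ((E.card : ℝ) / (Fintype.card F : ℝ)) := by ring

/-- The master error estimate for the trace. -/
lemma error_main {t : F} (ht : t ≠ 0) (hd : 2 ≤ d) (E : Finset (Fin d → F)) :
    |((Dm E * Amat t * Dm E)^5).trace
        - (E.card : ℝ)^5 / (Fintype.card F : ℝ)^5|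
      ≤ (muF F d * ((E.card : ℝ) / (Fintype.card F : ℝ))^4 + (((E.card : ℝ) / (Fintype.card F : ℝ)) + muF F d) * muF F d * ((E.card : ℝ) / (Fintype.card F : ℝ))^3
          + (((E.card : ℝ) / (Fintype.card F : ℝ)) + muF F d)^2 * muF F d * ((E.card : ℝ) / (Fintype.card F : ℝ))^2 + (((E.card : ℝ) / (Fintype.card F : ℝ)) + muF F d)^3 * muF F d * ((E.card : ℝ) / (Fintype.card F : ℝ)))
        + (muF F d^4 * ((E.card : ℝ) / (Fintype.card F : ℝ)) + muF F d^3 * (((E.card : ℝ) / (Fintype.card F : ℝ)) + muF F d) * ((E.card : ℝ) / (Fintype.card F : ℝ))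
          + muF F d^2 * (((E.card : ℝ) / (Fintype.card F : ℝ)) + muF F d)^2 * ((E.card : ℝ) / (Fintype.card F : ℝ)) + muF F d * (((E.card : ℝ) / (Fintype.card F : ℝ)) + muF F d)^3 * ((E.card : ℝ) / (Fintype.card F : ℝ)))
        + muF F d^3 * (muF F d * (E.card : ℝ) + (E.card : ℝ)^2 / (Fintype.card F : ℝ)
            + (E.card : ℝ)^2 / (Fintype.card F : ℝ)^2) := by
  set q : ℝ := (Fintype.card F : ℝ) with hqdef
  set n : ℝ := (E.card : ℝ) with hndef
  set e : ℝ := n / q with hedef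
  set mu : ℝ := muF F d with hmudef
  set J : Matrix (Fin d → F) (Fin d → F) ℝ := Jhat E with hJdef
  set M : Matrix (Fin d → F) (Fin d → F) ℝ := Mh t E with hMdef
  have her : 0 ≤ e := div_nonneg (Nat.cast_nonneg _) (le_of_lt Q_pos)
  have hOpJ : OpB J e := OpB_J E
  have hOpM : OpB M mu := OpB_Mh ht hd E
  have hOpB : OpB (J + M) (e + mu) := hOpJ.add hOpM
  have hdec : Dm E * Amat t * Dm E = J + M := B_decomp t E
  rw [hdec, telescope]
  simp only [Matrix.trace_add]
  rw [trace_Jhat_five]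
  rw [← hqdef, ← hndef]
  have hmain : q^5 = (Fintype.card F : ℝ)^5 := rfl
  -- the difference
  have hre : ∀ s1 s9 : ℝ, (n^5/q^5 + s1 + s9) - n^5/q^5 = s1 + s9 := by intros; ring
  rw [show ∀ A B C : ℝ, n ^ 5 / q ^ 5 + A + B + C - n ^ 5 / q ^ 5 = A + B + C from
    fun A B C => by ring]
  -- triangle inequality and individual bounds
  have h1 : |(((J + M) ^ 3 * M) * J).trace| ≤ ((e+mu)^3 * mu) * e :=
    tr_sandwich' ((hOpB.pow' 2).mul hOpM) E
  have h2 : |(((J + M) ^ 2 * M) * J^2).trace| ≤ ((e+mu)^2 * mu) * e^1 * e :=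
    tr_sandwich_pow ((hOpB.pow' 1).mul hOpM) E 1
  have h3 : |(((J + M) * M) * J^3).trace| ≤ ((e+mu) * mu) * e^2 * e := by
    have := tr_sandwich_pow (hOpB.mul hOpM) E 2
    exact this
  have h4 : |(M * J^4).trace| ≤ mu * e^3 * e := tr_sandwich_pow hOpM E 3
  have h5 : |(((J + M) ^ 3 * J) * M).trace| ≤ (mu * (e+mu)^3) * e := by
    rw [Matrix.trace_mul_comm, ← Matrix.mul_assoc]
    exact tr_sandwich' (hOpM.mul (hOpB.pow' 2)) E
  have h6 : |(((J + M) ^ 2 * J) * M^2).trace| ≤ (mu^2 * (e+mu)^2) * e := by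
    rw [Matrix.trace_mul_comm, ← Matrix.mul_assoc]
    exact tr_sandwich' ((hOpM.pow' 1).mul (hOpB.pow' 1)) E
  have h7 : |(((J + M) * J) * M^3).trace| ≤ (mu^3 * (e+mu)) * e := by
    rw [Matrix.trace_mul_comm, ← Matrix.mul_assoc]
    exact tr_sandwich' ((hOpM.pow' 2).mul hOpB) E
  have h8 : |(J * M^4).trace| ≤ mu^4 * e := by
    rw [Matrix.trace_mul_comm]
    exact tr_sandwich' (hOpM.pow' 3) E
  have h9 : |(M^5).trace| ≤ mu^3 * (mu * n + n^2/q + n^2/q^2) := by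
    calc |(M^5).trace| ≤ mu^3 * frob M := tr_Mh_five ht hd E
      _ ≤ mu^3 * (mu * n + n^2/q + n^2/q^2) := by
          apply mul_le_mul_of_nonneg_left _ (pow_nonneg muF_nonneg 3)
          exact frob_Mh_le ht hd E
  have habs : ∀ a b c : ℝ, |a + b + c| ≤ |a| + |b| + |c| := fun a b c =>
    le_trans (abs_add_le _ _) (add_le_add_left (abs_add_le _ _) _)
  have habs4 : ∀ a b c dd : ℝ, |a + b + c + dd| ≤ |a| + |b| + |c| + |dd| := fun a b c dd =>
    le_trans (abs_add_le _ _) (add_le_add_left (habs a b c) _)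
  calc |((J + M) ^ 3 * M * J).trace + ((J + M) ^ 2 * M * J ^ 2).trace
        + ((J + M) * M * J ^ 3).trace + (M * J ^ 4).trace
      + (((J + M) ^ 3 * J * M).trace + ((J + M) ^ 2 * J * M ^ 2).trace
        + ((J + M) * J * M ^ 3).trace + (J * M ^ 4).trace)
      + (M ^ 5).trace|
      ≤ |((J + M) ^ 3 * M * J).trace + ((J + M) ^ 2 * M * J ^ 2).trace
        + ((J + M) * M * J ^ 3).trace + (M * J ^ 4).trace|
      + |((J + M) ^ 3 * J * M).trace + ((J + M) ^ 2 * J * M ^ 2).trace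
        + ((J + M) * J * M ^ 3).trace + (J * M ^ 4).trace|
      + |(M ^ 5).trace| := habs _ _ _
    _ ≤ (|((J + M) ^ 3 * M * J).trace| + |((J + M) ^ 2 * M * J ^ 2).trace|
        + |((J + M) * M * J ^ 3).trace| + |(M * J ^ 4).trace|)
      + (|((J + M) ^ 3 * J * M).trace| + |((J + M) ^ 2 * J * M ^ 2).trace|
        + |((J + M) * J * M ^ 3).trace| + |(J * M ^ 4).trace|)
      + |(M ^ 5).trace| := by
        apply add_le_add_left
        exact add_le_add (habs4 _ _ _ _) (habs4 _ _ _ _)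
    _ ≤ (mu * e^4 + (e + mu) * mu * e^3 + (e + mu)^2 * mu * e^2 + (e + mu)^3 * mu * e)
      + (mu^4 * e + mu^3 * (e + mu) * e + mu^2 * (e + mu)^2 * e + mu * (e + mu)^3 * e)
      + mu^3 * (mu * n + n^2/q + n^2/q^2) := by
        have b1 := h1; have b2 := h2; have b3 := h3; have b4 := h4
        have b5 := h5; have b6 := h6; have b7 := h7; have b8 := h8; have b9 := h9
        apply add_le_add
        apply add_le_add
        · calc |((J + M) ^ 3 * M * J).trace| + |((J + M) ^ 2 * M * J ^ 2).trace|
              + |((J + M) * M * J ^ 3).trace| + |(M * J ^ 4).trace|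
              ≤ ((e+mu)^3 * mu) * e + ((e+mu)^2 * mu) * e^1 * e
                + ((e+mu) * mu) * e^2 * e + mu * e^3 * e := by
                apply add_le_add
                apply add_le_add
                apply add_le_add
                exacts [h1, h2, h3, h4]
            _ = mu * e^4 + (e + mu) * mu * e^3 + (e + mu)^2 * mu * e^2
                + (e + mu)^3 * mu * e := by ring
        · calc |((J + M) ^ 3 * J * M).trace| + |((J + M) ^ 2 * J * M ^ 2).trace|
              + |((J + M) * J * M ^ 3).trace| + |(J * M ^ 4).trace|
              ≤ (mu * (e+mu)^3) * e + (mu^2 * (e+mu)^2) * e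
                + (mu^3 * (e+mu)) * e + mu^4 * e := by
                apply add_le_add
                apply add_le_add
                apply add_le_add
                exacts [h5, h6, h7, h8]
            _ = mu^4 * e + mu^3 * (e + mu) * e + mu^2 * (e + mu)^2 * e
                + mu * (e + mu)^3 * e := by ring
        · exact h9

end CCP5

namespace CCP5

variable {F : Type} [Field F] [Fintype F] [DecidableEq F] {d : ℕ}

lemma cycle_eq_trace (t : F) (E : Finset (Fin d → F)) :
    ((cycleCountProd F d 5 t E : ℕ) : ℝ) = ((Dm E * Amat t * Dm E)^5).trace := by
  unfold cycleCountProd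
  rw [Finset.card_filter]
  push_cast
  rw [Finset.sum_congr rfl (fun x (_ : x ∈ univ) => pointwise_ite t E x)]
  rw [sum_pi_five (Bb t E), trace_pow_five_eq]
  simp only [Bb_eq_entry]

set_option maxHeartbeats 2000000 in
lemma final_poly (q e mu g2 : ℝ)
    (hq2 : 2 ≤ q) (hmu : 0 ≤ mu)
    (h48 : 48 * mu ≤ e) (h8 : 8 * (mu^2 * q) ≤ e^2) (hg2 : mu^2*q^2 ≤ g2) :
    q^2 * ((mu * e^4 + (e + mu) * mu * e^3 + (e + mu)^2 * mu * e^2 + (e + mu)^3 * mu * e)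
      + (mu^4 * e + mu^3 * (e + mu) * e + mu^2 * (e + mu)^2 * e + mu * (e + mu)^3 * e))
    + mu^3 * (mu * e * q^3 + e^2 * q^3 + e^2 * q^2)
    ≤ 8 * g2 * e^3 + 32 * mu * e^4 * q^2 := by
  have hq0 : (0:ℝ) < q := by linarith
  have hmue : mu ≤ e := by linarith
  have he0 : (0:ℝ) ≤ e := le_trans hmu hmue
  have hb : e + mu ≤ 2*e := by linarith
  have hem : (0:ℝ) ≤ e + mu := by linarith
  have hmu2 : mu^2 ≤ e^2 := pow_le_pow_left₀ hmu hmue 2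
  have hmu3 : mu^3 ≤ e^3 := pow_le_pow_left₀ hmu hmue 3
  have hβ2 : (e+mu)^2 ≤ 4*e^2 := by nlinarith
  have hβ3 : (e+mu)^3 ≤ 8*e^3 := by
    have k1 : (e+mu)^3 ≤ 2*e*(e+mu)^2 := by
      nlinarith [mul_nonneg (by linarith : (0:ℝ) ≤ 2*e - (e+mu)) (mul_nonneg hem hem)]
    have k2 : 2*e*(e+mu)^2 ≤ 8*e^3 := by
      nlinarith [mul_nonneg (by linarith : (0:ℝ) ≤ 4*e^2 - (e+mu)^2) he0]
    linarith
  -- family 1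
  have f2 : (e + mu) * mu * e^3 ≤ 2*(mu*e^4) := by
    nlinarith [mul_nonneg (by linarith : (0:ℝ) ≤ 2*e - (e+mu))
      (mul_nonneg hmu (pow_nonneg he0 3))]
  have f3 : (e + mu)^2 * mu * e^2 ≤ 4*(mu*e^4) := by
    nlinarith [mul_nonneg (by linarith : (0:ℝ) ≤ 4*e^2 - (e+mu)^2)
      (mul_nonneg hmu (pow_nonneg he0 2))]
  have f4 : (e + mu)^3 * mu * e ≤ 8*(mu*e^4) := by
    nlinarith [mul_nonneg (by linarith : (0:ℝ) ≤ 8*e^3 - (e+mu)^3)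
      (mul_nonneg hmu he0)]
  -- family 2
  have g1 : mu^4 * e ≤ mu*e^4 := by
    nlinarith [mul_nonneg (by linarith : (0:ℝ) ≤ e^3 - mu^3) (mul_nonneg hmu he0)]
  have g2t : mu^3 * (e + mu) * e ≤ 2*(mu*e^4) := by
    nlinarith [mul_nonneg (by linarith : (0:ℝ) ≤ 2*e - (e+mu))
      (mul_nonneg (pow_nonneg hmu 3) he0),
      mul_nonneg (by linarith : (0:ℝ) ≤ e^2 - mu^2)
        (mul_nonneg (mul_nonneg hmu he0) (mul_nonneg he0 he0))]
  have g3t : mu^2 * (e + mu)^2 * e ≤ 4*(mu*e^4) := by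
    nlinarith [mul_nonneg (by linarith : (0:ℝ) ≤ 4*e^2 - (e+mu)^2)
      (mul_nonneg (pow_nonneg hmu 2) he0),
      mul_nonneg (by linarith : (0:ℝ) ≤ e - mu)
        (mul_nonneg (mul_nonneg hmu he0) (mul_nonneg (mul_nonneg he0 he0) he0))]
  have g4t : mu * (e + mu)^3 * e ≤ 8*(mu*e^4) := by
    nlinarith [mul_nonneg (by linarith : (0:ℝ) ≤ 8*e^3 - (e+mu)^3)
      (mul_nonneg hmu he0)]
  have hfam : (mu * e^4 + (e + mu) * mu * e^3 + (e + mu)^2 * mu * e^2 + (e + mu)^3 * mu * e)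
      + (mu^4 * e + mu^3 * (e + mu) * e + mu^2 * (e + mu)^2 * e + mu * (e + mu)^3 * e)
      ≤ 30 * (mu*e^4) := by linarith
  have hA : q^2 * ((mu * e^4 + (e + mu) * mu * e^3 + (e + mu)^2 * mu * e^2 + (e + mu)^3 * mu * e)
      + (mu^4 * e + mu^3 * (e + mu) * e + mu^2 * (e + mu)^2 * e + mu * (e + mu)^3 * e))
      ≤ 30 * (mu * e^4 * q^2) := by
    have h := mul_le_mul_of_nonneg_left hfam (sq_nonneg q)
    linarith
  have hB : mu^3 * e^2 * q^3 + mu^3 * e^2 * q^2 ≤ (3/16) * (mu * e^4 * q^2) := by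
    have hq23 : q^2 ≤ q^3 / 2 := by nlinarith [sq_nonneg q]
    have h1 : mu^3 * e^2 * q^2 ≤ mu^3 * e^2 * (q^3/2) := by
      apply mul_le_mul_of_nonneg_left hq23
      positivity
    have h2 : mu^3 * e^2 * q^3 ≤ (1/8) * (mu * e^4 * q^2) := by
      nlinarith [mul_nonneg (mul_nonneg (mul_nonneg hmu he0) (mul_nonneg he0 hq0.le))
        (mul_nonneg he0 hq0.le),
        mul_nonneg (by positivity : (0:ℝ) ≤ mu * e^2 * q^2)
          (by linarith : (0:ℝ) ≤ e^2 - 8*(mu^2*q))]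
    linarith
  have hC : mu^4 * e * q^3 ≤ 8 * g2 * e^3 := by
    have hgm : (0:ℝ) ≤ g2 - mu^2*q^2 := by linarith
    nlinarith [mul_nonneg (by positivity : (0:ℝ) ≤ 8*e^3) hgm,
      mul_nonneg (by positivity : (0:ℝ) ≤ 8*(mu^2*q^2)*e)
        (by linarith : (0:ℝ) ≤ e^2 - 8*(mu^2*q)),
      mul_nonneg (mul_nonneg (mul_nonneg (pow_nonneg hmu 4) he0) (pow_nonneg hq0.le 3))
        (by norm_num : (0:ℝ) ≤ 63)]
  have hfin : (0:ℝ) ≤ mu * e^4 * q^2 := by positivity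
  linarith

lemma muF_eq_rpow (hd : 1 ≤ d) :
    muF F d = (Fintype.card F : ℝ) ^ (((d:ℝ) - 1)/2) := by
  unfold muF
  rw [← Real.rpow_natCast (Fintype.card F : ℝ) (d-1)]
  rw [Real.sqrt_eq_rpow, ← Real.rpow_mul (le_of_lt Q_pos)]
  congr 1
  rw [Nat.cast_sub hd]
  push_cast
  ring

end CCP5

open CCP5

set_option maxHeartbeats 1000000

theorem cycle_count_prod_five (F : Type) [Field F] [Fintype F] [DecidableEq F]
    (d : ℕ) (hd : 2 ≤ d) (t : F) (ht : t ≠ 0)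
    (E : Finset (Fin d → F))
    (q : ℝ) (hq : q = (Fintype.card F : ℝ))
    (γ : ℝ) (hγ : γ = if d = 2 then (-1 : ℝ) else -(((d : ℝ) - 2) / 2))
    (hsize : 12 * q ^ γ + 8 * q ^ ((d : ℝ) + 2) / (E.card : ℝ) ^ 2 +
      48 * q ^ (((d : ℝ) + 1) / 2) / (E.card : ℝ) ≤ 1) :
    |(cycleCountProd F d 5 t E : ℝ) - (E.card : ℝ) ^ 5 / q ^ 5| ≤
      (E.card : ℝ) ^ 5 / q ^ 5 *
        (12 * q ^ γ + 8 * q ^ ((2 * (d : ℝ) + 3) / 2) / (E.card : ℝ) ^ 2 +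
          32 * q ^ (((d : ℝ) + 1) / 2) / (E.card : ℝ)) := by
  subst hq
  by_cases hE : E.card = 0
  · have hC : cycleCountProd F d 5 t E = 0 := by
      have hE0 : E = ∅ := Finset.card_eq_zero.mp hE
      unfold cycleCountProd
      rw [Finset.card_eq_zero, Finset.filter_eq_empty_iff]
      rintro x _ ⟨hmem, -⟩
      have := hmem 0
      rw [hE0] at this
      exact absurd this (Finset.notMem_empty _)
    rw [hC, hE]
    norm_num
  -- main case
  rw [cycle_eq_trace t E]
  refine le_trans (error_main ht hd E) ?_
  have hd1 : 1 ≤ d := by omega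
  have hQ0 : (0:ℝ) < (Fintype.card F : ℝ) := Q_pos
  have hQ2 : (2:ℝ) ≤ (Fintype.card F : ℝ) := Q_ge_two
  have hQ1 : (1:ℝ) ≤ (Fintype.card F : ℝ) := Q_ge_one
  have hn : (0:ℝ) < (E.card : ℝ) := by exact_mod_cast Nat.pos_of_ne_zero hE
  set Q : ℝ := (Fintype.card F : ℝ) with hQdef
  set n : ℝ := (E.card : ℝ) with hndef
  set mu : ℝ := muF F d with hmudef
  set e : ℝ := n / Q with hedef
  have hQne : Q ≠ 0 := ne_of_gt hQ0
  have hnne : n ≠ 0 := ne_of_gt hn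
  have hmu0 : (0:ℝ) ≤ mu := muF_nonneg
  -- rpow identities
  have hmu_eq : mu = Q ^ (((d:ℝ) - 1)/2) := muF_eq_rpow hd1
  have hP : mu * Q = Q ^ (((d:ℝ) + 1)/2) := by
    calc mu * Q = Q ^ (((d:ℝ) - 1)/2) * Q ^ (1:ℝ) := by rw [hmu_eq, Real.rpow_one]
      _ = Q ^ (((d:ℝ) - 1)/2 + 1) := (Real.rpow_add hQ0 _ _).symm
      _ = Q ^ (((d:ℝ) + 1)/2) := by congr 1; ring
  have hP2 : (mu * Q)^2 = Q ^ ((d:ℝ) + 1) := by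
    rw [hP, ← Real.rpow_natCast (Q ^ (((d:ℝ)+1)/2)) 2, ← Real.rpow_mul hQ0.le]
    congr 1
    push_cast
    ring
  have hQd2 : Q ^ ((d:ℝ) + 2) = (mu * Q)^2 * Q := by
    calc Q ^ ((d:ℝ) + 2) = Q ^ ((d:ℝ) + 1 + 1) := by congr 1; ring
      _ = Q ^ ((d:ℝ)+1) * Q ^ (1:ℝ) := Real.rpow_add hQ0 _ _
      _ = (mu * Q)^2 * Q := by rw [Real.rpow_one, hP2]
  -- extract hypotheses from hsize
  have hterm1 : (0:ℝ) ≤ 12 * Q ^ γ := by positivity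
  have hterm2 : (0:ℝ) ≤ 8 * Q ^ ((d:ℝ) + 2) / n^2 := by positivity
  have hterm3 : (0:ℝ) ≤ 48 * Q ^ (((d:ℝ) + 1)/2) / n := by positivity
  have h48 : 48 * (mu * Q) ≤ n := by
    have h1 : 48 * Q ^ (((d:ℝ)+1)/2) / n ≤ 1 := by linarith
    rw [div_le_one hn] at h1
    rw [hP]
    linarith
  have h8Q : 8 * Q ^ ((d:ℝ) + 2) ≤ n^2 := by
    have h1 : 8 * Q ^ ((d:ℝ)+2) / n^2 ≤ 1 := by linarith
    rw [div_le_one (by positivity)] at h1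
    linarith
  have h48' : 48 * mu ≤ e := by
    rw [hedef, le_div_iff₀ hQ0]
    linarith
  have h8' : 8 * (mu^2 * Q) ≤ e^2 := by
    rw [hedef, div_pow, le_div_iff₀ (by positivity : (0:ℝ) < Q^2)]
    rw [hQd2] at h8Q
    nlinarith [h8Q]
  have hg2' : mu^2 * Q^2 ≤ Q ^ ((2*(d:ℝ) + 3)/2) := by
    have h1 : Q ^ ((d:ℝ)+1) ≤ Q ^ ((2*(d:ℝ)+3)/2) :=
      Real.rpow_le_rpow_of_exponent_le hQ1 (by linarith)
    nlinarith [hP2]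
  have hfp := final_poly Q e mu (Q ^ ((2*(d:ℝ) + 3)/2)) hQ2 hmu0 h48' h8' hg2'
  -- convert to the division form
  have hmain : (mu * e^4 + (e + mu) * mu * e^3 + (e + mu)^2 * mu * e^2 + (e + mu)^3 * mu * e)
      + (mu^4 * e + mu^3 * (e + mu) * e + mu^2 * (e + mu)^2 * e + mu * (e + mu)^3 * e)
      + mu^3 * (mu * n + n^2 / Q + n^2 / Q^2)
      ≤ n^5 / Q^5 * (8 * Q ^ ((2*(d:ℝ) + 3)/2) / n^2 + 32 * (mu * Q) / n) := by
    rw [show (mu * e^4 + (e + mu) * mu * e^3 + (e + mu)^2 * mu * e^2 + (e + mu)^3 * mu * e)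
        + (mu^4 * e + mu^3 * (e + mu) * e + mu^2 * (e + mu)^2 * e + mu * (e + mu)^3 * e)
        + mu^3 * (mu * n + n^2 / Q + n^2 / Q^2)
      = (Q^2 * ((mu * e^4 + (e + mu) * mu * e^3 + (e + mu)^2 * mu * e^2 + (e + mu)^3 * mu * e)
          + (mu^4 * e + mu^3 * (e + mu) * e + mu^2 * (e + mu)^2 * e + mu * (e + mu)^3 * e))
        + mu^3 * (mu * e * Q^3 + e^2 * Q^3 + e^2 * Q^2)) / Q^2 from by
      rw [hedef]
      field_simp]
    rw [show n^5 / Q^5 * (8 * Q ^ ((2*(d:ℝ) + 3)/2) / n^2 + 32 * (mu * Q) / n)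
      = (8 * Q ^ ((2*(d:ℝ) + 3)/2) * e^3 + 32 * mu * e^4 * Q^2) / Q^2 from by
      rw [hedef]
      field_simp]
    exact (div_le_div_iff_of_pos_right (by positivity : (0:ℝ) < Q^2)).mpr hfp
  refine le_trans hmain ?_
  rw [← hP]
  have hfac : 8 * Q ^ ((2*(d:ℝ) + 3)/2) / n^2 + 32 * (mu * Q) / n
      ≤ 12 * Q ^ γ + 8 * Q ^ ((2*(d:ℝ) + 3)/2) / n^2 + 32 * (mu * Q) / n := by
    linarith
  apply mul_le_mul_of_nonneg_left hfac
  positivity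
end

section
/- For every integer k ≥ 1, |P_{2k+1}^prod(E) - q^{-1}·(P_k^prod(E))²| ≤ q^{(d-1)/2}·P_{2k}^prod(E), and |P_{2k}^prod(E) - q^{-1}·P_k^prod(E)·P_{k-1}^prod(E)| ≤ q^{(d-1)/2}·(P_{2k}^prod(E)·P_{2k-2}^prod(E))^{1/2}. -/
open Finset
open scoped Classical

/-- The number of paths of length `k` in the dot-product graph of `E`: tuples
`(x₀,…,x_k) ∈ E^{k+1}` with `x_{i-1} · x_i = t` for `i = 1,…,k`, where
`x·y = x₁y₁ + ⋯ + x_dy_d`. -/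
noncomputable def pathCountProd (F : Type) [Field F] [Fintype F] [DecidableEq F]
    (d k : ℕ) (t : F) (E : Finset (Fin d → F)) : ℕ :=
  (Finset.univ.filter (fun x : Fin (k + 1) → (Fin d → F) =>
    (∀ i, x i ∈ E) ∧ ∀ i : Fin k, ∑ j, x i.castSucc j * x i.succ j = t)).card

section Aux
variable (F : Type) [Field F] [Fintype F] [DecidableEq F] (d : ℕ) (t : F) (E : Finset (Fin d → F))

noncomputable def pathsTo (m : ℕ) (x : Fin d → F) : Finset (Fin (m+1) → (Fin d → F)) :=
  Finset.univ.filter (fun p =>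
    ((∀ i, p i ∈ E) ∧ ∀ i : Fin m, ∑ j, p i.castSucc j * p i.succ j = t) ∧ p (Fin.last m) = x)

lemma pathCount_eq_sum (m : ℕ) :
    pathCountProd F d m t E = ∑ x : Fin d → F, (pathsTo F d t E m x).card := by
  rw [pathCountProd, card_eq_sum_card_fiberwise (f := fun p => p (Fin.last m))
    (t := Finset.univ) (fun p _ => mem_univ _)]
  refine Finset.sum_congr rfl fun x _ => ?_
  rw [pathsTo, filter_filter]

lemma card_pathsTo_zero (x : Fin d → F) :
    (pathsTo F d t E 0 x).card = if x ∈ E then 1 else 0 := by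
  by_cases hx : x ∈ E
  · rw [if_pos hx]
    rw [Finset.card_eq_one]
    refine ⟨fun _ => x, ?_⟩
    ext p
    simp only [pathsTo, mem_filter, mem_univ, true_and, Finset.mem_singleton]
    constructor
    · rintro ⟨-, hp⟩
      funext i
      have hi : i = Fin.last 0 := Fin.ext (by simpa using Nat.lt_one_iff.mp i.isLt)
      rw [hi, hp]
    · rintro rfl
      exact ⟨⟨fun i => hx, fun i => i.elim0⟩, rfl⟩
  · rw [if_neg hx, Finset.card_eq_zero]
    ext p
    simp only [pathsTo, mem_filter, Finset.notMem_empty, iff_false, mem_univ, true_and, not_and]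
    rintro ⟨hp, -⟩ rfl
    exact hx (hp _)

lemma card_pathsTo_succ (m : ℕ) (x : Fin d → F) :
    (pathsTo F d t E (m+1) x).card =
      if x ∈ E then
        ∑ y : Fin d → F, (if (∑ j, y j * x j) = t then (pathsTo F d t E m y).card else 0)
      else 0 := by
  by_cases hx : x ∈ E
  · rw [if_pos hx]
    rw [card_eq_sum_card_fiberwise (f := fun p => p (Fin.last m).castSucc)
      (t := Finset.univ) (fun p _ => mem_univ _)]
    refine Finset.sum_congr rfl fun y _ => ?_
    by_cases hyx : (∑ j, y j * x j) = t
    · rw [if_pos hyx]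
      refine Finset.card_bij' (fun p _ => Fin.init p) (fun q _ => Fin.snoc q x) ?_ ?_ ?_ ?_
      · rintro p hp
        simp only [mem_filter, mem_univ, true_and, pathsTo] at hp ⊢
        obtain ⟨⟨⟨h1, h2⟩, h3⟩, h4⟩ := hp
        refine ⟨⟨fun i => h1 _, fun i => ?_⟩, ?_⟩
        · have := h2 i.castSucc
          simp only [Fin.init]
          rw [← Fin.succ_castSucc]
          exact this
        · simpa [Fin.init] using h4
      · rintro q hq
        simp only [mem_filter, mem_univ, true_and, pathsTo] at hq ⊢
        obtain ⟨⟨h1, h2⟩, h3⟩ := hq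
        refine ⟨⟨⟨fun i => ?_, fun i => ?_⟩, ?_⟩, ?_⟩
        · refine Fin.lastCases ?_ (fun j => ?_) i
          · simpa using hx
          · simpa using h1 j
        · refine Fin.lastCases ?_ (fun j => ?_) i
          · have h5 : (Fin.last m).succ = Fin.last (m+1) := rfl
            simpa [h5, h3] using hyx
          · have h6 : (j.castSucc).succ = (j.succ).castSucc := Fin.succ_castSucc j
            rw [h6]
            simp only [Fin.snoc_castSucc]
            exact h2 j
        · simp
        · simpa using h3
      · intro p hp
        simp only [pathsTo, mem_filter, mem_univ, true_and] at hp
        conv_rhs => rw [← Fin.snoc_init_self p]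
        exact congrArg (Fin.snoc (Fin.init p)) hp.1.2.symm
      · intro q hq
        simp
    · rw [if_neg hyx, Finset.card_eq_zero]
      ext p
      simp only [mem_filter, Finset.notMem_empty, iff_false, mem_univ, true_and, not_and,
        pathsTo]
      rintro ⟨⟨-, h2⟩, h3⟩ h4
      refine hyx ?_
      have h5 := h2 (Fin.last m)
      rw [show Fin.last (m+1) = (Fin.last m).succ from rfl] at h3
      rw [h4, h3] at h5
      exact h5
  · rw [if_neg hx, Finset.card_eq_zero]
    ext p
    simp only [pathsTo, mem_filter, Finset.notMem_empty, iff_false, mem_univ, true_and, not_and]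
    rintro ⟨hp, -⟩ rfl
    exact hx (hp _)

end Aux

section Aux2
variable (F : Type) [Field F] [Fintype F] [DecidableEq F] (d : ℕ) (t : F) (E : Finset (Fin d → F))

noncomputable def eE (x : Fin d → F) : ℝ := if x ∈ E then 1 else 0

noncomputable def Bmat (x y : Fin d → F) : ℝ := if (∑ j, x j * y j) = t then 1 else 0

lemma Bmat_comm (x y : Fin d → F) : Bmat F d t x y = Bmat F d t y x := by
  unfold Bmat
  simp_rw [mul_comm]

noncomputable def fvec : ℕ → (Fin d → F) → ℝ
  | 0 => fun x => eE F d E x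
  | (m+1) => fun x => eE F d E x * ∑ y, Bmat F d t y x * fvec m y

lemma fvec_eq_card : ∀ (m : ℕ) (x : Fin d → F),
    fvec F d t E m x = ((pathsTo F d t E m x).card : ℝ) := by
  intro m
  induction m with
  | zero =>
    intro x
    rw [card_pathsTo_zero]
    simp only [fvec, eE]
    split <;> simp
  | succ m ih =>
    intro x
    rw [card_pathsTo_succ]
    simp only [fvec, eE]
    by_cases hx : x ∈ E
    · rw [if_pos hx, if_pos hx, one_mul, Nat.cast_sum]
      refine Finset.sum_congr rfl fun y _ => ?_
      rw [ih y, Bmat]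
      split <;> simp
    · rw [if_neg hx, if_neg hx, zero_mul, Nat.cast_zero]

lemma fvec_nonneg (m : ℕ) (x : Fin d → F) : 0 ≤ fvec F d t E m x := by
  rw [fvec_eq_card]; positivity

lemma eE_mul_fvec (m : ℕ) (x : Fin d → F) :
    eE F d E x * fvec F d t E m x = fvec F d t E m x := by
  unfold eE
  by_cases hx : x ∈ E
  · rw [if_pos hx, one_mul]
  · rw [if_neg hx, zero_mul]
    cases m with
    | zero => simp only [fvec, eE, if_neg hx]
    | succ m => simp only [fvec, eE, if_neg hx, zero_mul]

lemma pathCount_eq_sum_fvec (m : ℕ) :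
    (pathCountProd F d m t E : ℝ) = ∑ x, fvec F d t E m x := by
  rw [pathCount_eq_sum, Nat.cast_sum]
  exact Finset.sum_congr rfl fun x _ => (fvec_eq_card F d t E m x).symm

lemma bilin_step (m k : ℕ) :
    ∑ y, (∑ x, fvec F d t E m x * Bmat F d t x y) * fvec F d t E k y
      = ∑ y, fvec F d t E (m+1) y * fvec F d t E k y := by
  refine Finset.sum_congr rfl fun y _ => ?_
  simp only [fvec]
  calc (∑ x, fvec F d t E m x * Bmat F d t x y) * fvec F d t E k y
      = (∑ z, Bmat F d t z y * fvec F d t E m z) * fvec F d t E k y := by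
        congr 1
        exact Finset.sum_congr rfl fun x _ => by rw [mul_comm]
    _ = (∑ z, Bmat F d t z y * fvec F d t E m z) * (eE F d E y * fvec F d t E k y) := by
        rw [eE_mul_fvec]
    _ = eE F d E y * (∑ z, Bmat F d t z y * fvec F d t E m z) * fvec F d t E k y := by
        ring

lemma sum_swap_step (m k : ℕ) :
    ∑ x, fvec F d t E m x * fvec F d t E (k+1) x
      = ∑ y, fvec F d t E (m+1) y * fvec F d t E k y := by
  rw [← bilin_step]
  calc ∑ x, fvec F d t E m x * fvec F d t E (k+1) x
      = ∑ x, ∑ y, fvec F d t E m x * (Bmat F d t y x * fvec F d t E k y) := by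
        refine Finset.sum_congr rfl fun x _ => ?_
        simp only [fvec]
        calc fvec F d t E m x * (eE F d E x * ∑ y, Bmat F d t y x * fvec F d t E k y)
            = (eE F d E x * fvec F d t E m x) * ∑ y, Bmat F d t y x * fvec F d t E k y := by
              ring
          _ = fvec F d t E m x * ∑ y, Bmat F d t y x * fvec F d t E k y := by
              rw [eE_mul_fvec]
          _ = _ := by rw [Finset.mul_sum]
    _ = ∑ y, ∑ x, fvec F d t E m x * (Bmat F d t y x * fvec F d t E k y) := Finset.sum_comm
    _ = ∑ y, (∑ x, fvec F d t E m x * Bmat F d t x y) * fvec F d t E k y := by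
        refine Finset.sum_congr rfl fun y _ => ?_
        rw [Finset.sum_mul]
        refine Finset.sum_congr rfl fun x _ => ?_
        rw [Bmat_comm]
        ring

lemma glue (m k : ℕ) :
    ∑ x, fvec F d t E m x * fvec F d t E k x = (pathCountProd F d (m + k) t E : ℝ) := by
  induction k generalizing m with
  | zero =>
    rw [Nat.add_zero, pathCount_eq_sum_fvec]
    refine Finset.sum_congr rfl fun x _ => ?_
    simp only [fvec]
    rw [mul_comm, eE_mul_fvec]
  | succ k ih =>
    have h : m + 1 + k = m + (k + 1) := by omega
    rw [sum_swap_step, ih (m+1), h]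

lemma bilin_eq_pathCount (m k : ℕ) :
    ∑ x, ∑ y, fvec F d t E m x * Bmat F d t x y * fvec F d t E k y
      = (pathCountProd F d (m + 1 + k) t E : ℝ) := by
  rw [← glue F d t E (m+1) k, ← bilin_step]
  calc ∑ x, ∑ y, fvec F d t E m x * Bmat F d t x y * fvec F d t E k y
      = ∑ y, ∑ x, fvec F d t E m x * Bmat F d t x y * fvec F d t E k y := Finset.sum_comm
    _ = ∑ y, (∑ x, fvec F d t E m x * Bmat F d t x y) * fvec F d t E k y := by
        refine Finset.sum_congr rfl fun y _ => ?_
        rw [Finset.sum_mul]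

end Aux2

section Count

lemma fiber_card {G H : Type} [AddCommGroup G] [AddCommGroup H] [Fintype G] [Fintype H]
    [DecidableEq H] (φ : G →+ H) (hφ : Function.Surjective φ) (b : H) :
    (Finset.univ.filter (fun x => φ x = b)).card * Fintype.card H = Fintype.card G := by
  have key : ∀ b1 b2 : H, (Finset.univ.filter (fun x => φ x = b1)).card
      = (Finset.univ.filter (fun x => φ x = b2)).card := by
    intro b1 b2
    obtain ⟨u, hu⟩ := hφ (b2 - b1)
    apply Finset.card_bij (fun x _ => x + u)
    · intro a ha
      simp only [mem_filter, mem_univ, true_and] at ha ⊢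
      rw [map_add, ha, hu, add_sub_cancel]
    · intro a1 _ a2 _ h
      exact add_right_cancel h
    · intro c hc
      simp only [mem_filter, mem_univ, true_and] at hc
      refine ⟨c - u, ?_, by abel⟩
      simp only [mem_filter, mem_univ, true_and]
      rw [map_sub, hc, hu]
      abel
  have h1 : Fintype.card G = ∑ b' : H, (Finset.univ.filter (fun x => φ x = b')).card := by
    rw [← Finset.card_univ]
    exact Finset.card_eq_sum_card_fiberwise (fun x _ => Finset.mem_univ _)
  have h2 : ∀ b' ∈ Finset.univ, (Finset.univ.filter (fun x => φ x = b')).card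
      = (Finset.univ.filter (fun x => φ x = b)).card := fun b' _ => key b' b
  rw [h1, Finset.sum_congr rfl h2, Finset.sum_const, Finset.card_univ, smul_eq_mul, mul_comm]

variable {F : Type} [Field F] [Fintype F] [DecidableEq F] {d : ℕ}

noncomputable def dotHom (y : Fin d → F) : (Fin d → F) →+ F where
  toFun := fun x => ∑ j, x j * y j
  map_zero' := by simp
  map_add' := by
    intro a b
    simp [add_mul, Finset.sum_add_distrib]

lemma sum_single_mul (i : Fin d) (c : F) (y : Fin d → F) :
    ∑ m, (Pi.single i c : Fin d → F) m * y m = c * y i := by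
  rw [Finset.sum_eq_single i]
  · rw [Pi.single_eq_same]
  · intro m _ hmi
    rw [Pi.single_eq_of_ne hmi, zero_mul]
  · intro h
    exact absurd (Finset.mem_univ i) h

lemma dotHom_surj {y : Fin d → F} (hy : y ≠ 0) : Function.Surjective (dotHom y) := by
  obtain ⟨j, hj⟩ := Function.ne_iff.mp hy
  have hj : y j ≠ 0 := hj
  intro c
  refine ⟨(Pi.single j (c / y j) : Fin d → F), ?_⟩
  show ∑ m, (Pi.single j (c / y j) : Fin d → F) m * y m = c
  rw [sum_single_mul, div_mul_cancel₀ _ hj]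

noncomputable def pairHom (y y' : Fin d → F) : (Fin d → F) →+ F × F where
  toFun := fun x => (∑ j, x j * y j, ∑ j, x j * y' j)
  map_zero' := by simp [Prod.ext_iff]
  map_add' := by
    intro a b
    simp [add_mul, Finset.sum_add_distrib, Prod.ext_iff]

lemma exists_minor {y y' : Fin d → F} (hy : y ≠ 0) (hcol : ∀ lam : F, y' ≠ lam • y) :
    ∃ i j, y i * y' j - y j * y' i ≠ 0 := by
  by_contra h
  push_neg at h
  obtain ⟨i0, hi0⟩ := Function.ne_iff.mp hy
  have hi0 : y i0 ≠ 0 := hi0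
  apply hcol (y' i0 / y i0)
  funext j
  have h2 : y i0 * y' j = y j * y' i0 := sub_eq_zero.mp (h i0 j)
  show y' j = (y' i0 / y i0) * y j
  field_simp
  linear_combination h2

lemma pairHom_surj {y y' : Fin d → F} (hy : y ≠ 0) (hcol : ∀ lam : F, y' ≠ lam • y) :
    Function.Surjective (pairHom y y') := by
  obtain ⟨i, j, hΔ⟩ := exists_minor hy hcol
  rintro ⟨a, b⟩
  set Δ := y i * y' j - y j * y' i with hΔdef
  set x0 : Fin d → F :=
    (Pi.single i ((a * y' j - b * y j) / Δ) : Fin d → F)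
      + (Pi.single j ((b * y i - a * y' i) / Δ) : Fin d → F) with hx0
  have e1 : ∀ z : Fin d → F,
      ∑ m, x0 m * z m
      = ((a * y' j - b * y j) / Δ) * z i + ((b * y i - a * y' i) / Δ) * z j := by
    intro z
    rw [hx0]
    simp only [Pi.add_apply, add_mul, Finset.sum_add_distrib, sum_single_mul]
  refine ⟨x0, ?_⟩
  show (∑ m, x0 m * y m, ∑ m, x0 m * y' m) = (a, b)
  rw [Prod.ext_iff]
  constructor
  · show ∑ m, x0 m * y m = a
    rw [e1]
    field_simp
    ring
  · show ∑ m, x0 m * y' m = b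
    rw [e1]
    field_simp
    ring

lemma card_fun_eq : Fintype.card (Fin d → F) = Fintype.card F ^ d := by
  simp [Fintype.card_fun]

lemma count_dot_eq {y : Fin d → F} (hy : y ≠ 0) (c : F) :
    (Finset.univ.filter (fun x : Fin d → F => ∑ j, x j * y j = c)).card * Fintype.card F
      = Fintype.card F ^ d := by
  have := fiber_card (dotHom y) (dotHom_surj hy) c
  rwa [card_fun_eq] at this

lemma count_pair_eq {y y' : Fin d → F} (hy : y ≠ 0) (hcol : ∀ lam : F, y' ≠ lam • y) (c c' : F) :
    (Finset.univ.filter (fun x : Fin d → F =>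
        (∑ j, x j * y j = c) ∧ (∑ j, x j * y' j = c'))).card * Fintype.card F ^ 2
      = Fintype.card F ^ d := by
  have h := fiber_card (pairHom y y') (pairHom_surj hy hcol) (c, c')
  rw [card_fun_eq, Fintype.card_prod] at h
  have h2 : (Finset.univ.filter (fun x : Fin d → F => pairHom y y' x = (c, c')))
      = Finset.univ.filter (fun x : Fin d → F =>
        (∑ j, x j * y j = c) ∧ (∑ j, x j * y' j = c')) := by
    apply Finset.filter_congr
    intro x _
    show pairHom y y' x = (c, c') ↔ _
    rw [Prod.ext_iff]
    rfl
  rw [h2] at h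
  rw [← h]
  ring

end Count

section CBound
variable {F : Type} [Field F] [Fintype F] [DecidableEq F] {d : ℕ} {t : F}

lemma Bmat_zero (ht : t ≠ 0) (x : Fin d → F) : Bmat F d t x 0 = 0 := by
  unfold Bmat
  rw [if_neg]
  intro h
  apply ht
  rw [← h]
  simp

lemma sum_B_eq_card (y : Fin d → F) :
    ∑ x, Bmat F d t x y
      = ((Finset.univ.filter (fun x : Fin d → F => ∑ j, x j * y j = t)).card : ℝ) := by
  simp only [Bmat]
  rw [Finset.sum_boole]

lemma sum_B_zero (ht : t ≠ 0) : ∑ x, Bmat F d t x (0 : Fin d → F) = 0 := by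
  simp [Bmat_zero ht]

lemma sum_B_ne (hd : 1 ≤ d) {y : Fin d → F} (hy : y ≠ 0) :
    ∑ x, Bmat F d t x y = (Fintype.card F : ℝ) ^ (d - 1) := by
  rw [sum_B_eq_card]
  have h := count_dot_eq hy t
  have hcast : ((Finset.univ.filter (fun x : Fin d → F => ∑ j, x j * y j = t)).card : ℝ)
      * (Fintype.card F : ℝ) = (Fintype.card F : ℝ) ^ d := by exact_mod_cast h
  have hQ : (0:ℝ) < (Fintype.card F : ℝ) := by exact_mod_cast Fintype.card_pos
  have hpow : (Fintype.card F : ℝ) ^ d = (Fintype.card F : ℝ) ^ (d - 1) * (Fintype.card F : ℝ) := by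
    have h1 : (d - 1) + 1 = d := Nat.sub_add_cancel hd
    rw [← pow_succ, h1]
  rw [hpow] at hcast
  exact mul_right_cancel₀ (ne_of_gt hQ) hcast

lemma BB_self (x y : Fin d → F) : Bmat F d t x y * Bmat F d t x y = Bmat F d t x y := by
  unfold Bmat
  split <;> norm_num

lemma sum_BB_pair (hd : 2 ≤ d) {y y' : Fin d → F} (hy : y ≠ 0)
    (hcol : ∀ lam : F, y' ≠ lam • y) :
    ∑ x, Bmat F d t x y * Bmat F d t x y' = (Fintype.card F : ℝ) ^ (d - 2) := by
  have hterm : ∀ x : Fin d → F, Bmat F d t x y * Bmat F d t x y'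
      = if ((∑ j, x j * y j = t) ∧ (∑ j, x j * y' j = t)) then (1:ℝ) else 0 := by
    intro x
    unfold Bmat
    split_ifs with h1 h2 h3 <;> simp_all
  simp_rw [hterm]
  rw [Finset.sum_boole]
  have h := count_pair_eq hy hcol t t
  have hcast : ((Finset.univ.filter (fun x : Fin d → F =>
        (∑ j, x j * y j = t) ∧ (∑ j, x j * y' j = t))).card : ℝ)
      * (Fintype.card F : ℝ) ^ 2 = (Fintype.card F : ℝ) ^ d := by exact_mod_cast h
  have hQ : (0:ℝ) < (Fintype.card F : ℝ) := by exact_mod_cast Fintype.card_pos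
  have hpow : (Fintype.card F : ℝ) ^ d
      = (Fintype.card F : ℝ) ^ (d - 2) * (Fintype.card F : ℝ) ^ 2 := by
    have h1 : (d - 2) + 2 = d := Nat.sub_add_cancel hd
    rw [← pow_add, h1]
  rw [hpow] at hcast
  exact mul_right_cancel₀ (by positivity) hcast

lemma sum_BB_collinear (ht : t ≠ 0) {y y' : Fin d → F} {lam : F}
    (hlam : lam ≠ 1) (hyy' : y' = lam • y) :
    ∑ x, Bmat F d t x y * Bmat F d t x y' = 0 := by
  refine Finset.sum_eq_zero fun x _ => ?_
  unfold Bmat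
  split_ifs with h1 h2
  · exfalso
    apply hlam
    have h3 : ∑ j, x j * y' j = lam * ∑ j, x j * y j := by
      rw [hyy', Finset.mul_sum]
      refine Finset.sum_congr rfl fun j _ => ?_
      simp [Pi.smul_apply, smul_eq_mul]
      ring
    rw [h2, h1] at h3
    exact mul_right_cancel₀ ht (by rw [one_mul, ← h3])
  all_goals simp

lemma C_bound (hd : 2 ≤ d) (ht : t ≠ 0) (y y' : Fin d → F) :
    ∑ x, (Bmat F d t x y - (Fintype.card F : ℝ)⁻¹) * (Bmat F d t x y' - (Fintype.card F : ℝ)⁻¹)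
      ≤ if y = y' then (Fintype.card F : ℝ) ^ (d - 1) else 0 := by
  set Q : ℝ := (Fintype.card F : ℝ) with hQdef
  have hcard1 : (1:ℕ) ≤ Fintype.card F := Fintype.card_pos
  have hQ : (0:ℝ) < Q := by rw [hQdef]; exact_mod_cast Fintype.card_pos
  have hQ1 : (1:ℝ) ≤ Q := by rw [hQdef]; exact_mod_cast hcard1
  set c : ℝ := Q⁻¹ with hcdef
  have hcQ : c * Q = 1 := inv_mul_cancel₀ (ne_of_gt hQ)
  have hpow1 : Q ^ (d - 1) = Q ^ (d - 2) * Q := by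
    have h1 : (d - 2) + 1 = d - 1 := by omega
    rw [← pow_succ, h1]
  have hpowd : Q ^ d = Q ^ (d - 2) * Q ^ 2 := by
    have h1 : (d - 2) + 2 = d := Nat.sub_add_cancel hd
    rw [← pow_add, h1]
  have hpos2 : (0:ℝ) ≤ Q ^ (d - 2) := by positivity
  have expand :
      ∑ x, (Bmat F d t x y - c) * (Bmat F d t x y' - c)
        = (∑ x, Bmat F d t x y * Bmat F d t x y') - c * (∑ x, Bmat F d t x y')
          - c * (∑ x, Bmat F d t x y) + Q ^ d * c ^ 2 := by
    have hterm : ∀ x : Fin d → F, (Bmat F d t x y - c) * (Bmat F d t x y' - c)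
        = Bmat F d t x y * Bmat F d t x y' - c * Bmat F d t x y' - c * Bmat F d t x y + c ^ 2 :=
      fun x => by ring
    simp_rw [hterm]
    rw [Finset.sum_add_distrib, Finset.sum_sub_distrib, Finset.sum_sub_distrib,
      ← Finset.mul_sum, ← Finset.mul_sum, Finset.sum_const, Finset.card_univ,
      nsmul_eq_mul, card_fun_eq]
    push_cast
    ring
  have hd1 : 1 ≤ d := le_trans one_le_two hd
  have hQd2 : Q ^ d * c ^ 2 = Q ^ (d - 2) := by
    rw [hpowd, hcdef]
    field_simp
  have hcQ1 : c * Q ^ (d - 1) = Q ^ (d - 2) := by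
    rw [hpow1]
    calc c * (Q ^ (d-2) * Q) = Q ^ (d-2) * (c * Q) := by ring
      _ = Q ^ (d - 2) := by rw [hcQ, mul_one]
  by_cases hyy : y = y'
  · rw [if_pos hyy]
    subst hyy
    by_cases hy0 : y = 0
    · subst hy0
      rw [expand, sum_B_zero ht]
      have : ∑ x, Bmat F d t x (0 : Fin d → F) * Bmat F d t x (0 : Fin d → F) = 0 := by
        simp [Bmat_zero ht]
      rw [this, hQd2]
      have : Q ^ (d - 2) ≤ Q ^ (d - 1) := pow_le_pow_right₀ hQ1 (Nat.sub_le_sub_left one_le_two d)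
      linarith
    · rw [expand, sum_B_ne hd1 hy0]
      have h2 : ∑ x, Bmat F d t x y * Bmat F d t x y = Q ^ (d - 1) := by
        simp_rw [BB_self]
        exact sum_B_ne hd1 hy0
      rw [h2, hQd2, hcQ1]
      linarith
  · rw [if_neg hyy]
    by_cases hy0 : y = 0
    · subst hy0
      have hy'0 : y' ≠ 0 := fun h => hyy h.symm
      have h2 : ∑ x, Bmat F d t x 0 * Bmat F d t x y' = 0 := by
        simp [Bmat_zero ht]
      rw [expand, h2, sum_B_ne hd1 hy'0, sum_B_zero ht, hQd2, hcQ1]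
      linarith
    · by_cases hy'0 : y' = 0
      · subst hy'0
        have h2 : ∑ x, Bmat F d t x y * Bmat F d t x 0 = 0 := by
          simp [Bmat_zero ht]
        rw [expand, h2, sum_B_ne hd1 hy0, sum_B_zero ht, hQd2, hcQ1]
        linarith
      · by_cases hcol : ∃ lam : F, y' = lam • y
        · obtain ⟨lam, hlam⟩ := hcol
          have hlam1 : lam ≠ 1 := by
            rintro rfl
            apply hyy
            rw [hlam, one_smul]
          rw [expand, sum_BB_collinear ht hlam1 hlam, sum_B_ne hd1 hy0, sum_B_ne hd1 hy'0,
            hQd2, hcQ1]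
          linarith
        · push_neg at hcol
          rw [expand, sum_BB_pair hd hy0 hcol, sum_B_ne hd1 hy0, sum_B_ne hd1 hy'0,
            hQd2, hcQ1]
          linarith
end CBound

section Key
variable {F : Type} [Field F] [Fintype F] [DecidableEq F] {d : ℕ} {t : F}

lemma key_est (hd : 2 ≤ d) (ht : t ≠ 0) (f g : (Fin d → F) → ℝ)
    (hf : ∀ x, 0 ≤ f x) (hg : ∀ x, 0 ≤ g x) :
    |(∑ x, ∑ y, f x * Bmat F d t x y * g y)
        - (Fintype.card F : ℝ)⁻¹ * ((∑ x, f x) * (∑ y, g y))|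
      ≤ Real.sqrt ((Fintype.card F : ℝ) ^ (d - 1)) * Real.sqrt (∑ x, f x ^ 2)
          * Real.sqrt (∑ y, g y ^ 2) := by
  set Q : ℝ := (Fintype.card F : ℝ) with hQdef
  set c : ℝ := Q⁻¹ with hcdef
  set h : (Fin d → F) → ℝ := fun x => ∑ y, (Bmat F d t x y - c) * g y with hhdef
  have step1 : (∑ x, ∑ y, f x * Bmat F d t x y * g y) - c * ((∑ x, f x) * (∑ y, g y))
      = ∑ x, f x * h x := by
    have e1 : ∀ x, f x * h x
        = (∑ y, f x * Bmat F d t x y * g y) - c * ∑ y, f x * g y := by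
      intro x
      rw [hhdef]
      simp only
      rw [Finset.mul_sum, Finset.mul_sum, ← Finset.sum_sub_distrib]
      refine Finset.sum_congr rfl fun y _ => by ring
    rw [Finset.sum_congr rfl fun x _ => e1 x, Finset.sum_sub_distrib, ← Finset.mul_sum]
    congr 1
    rw [Finset.sum_mul_sum]
  have step3 : ∑ x, h x ^ 2 ≤ Q ^ (d - 1) * ∑ y, g y ^ 2 := by
    have e2 : ∑ x, h x ^ 2
        = ∑ y, ∑ y', (g y * g y') * (∑ x, (Bmat F d t x y - c) * (Bmat F d t x y' - c)) := by
      have e3 : ∀ x, h x ^ 2 = ∑ y, ∑ y', ((Bmat F d t x y - c) * g y)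
          * ((Bmat F d t x y' - c) * g y') := by
        intro x
        rw [pow_two, hhdef]
        simp only
        rw [Finset.sum_mul_sum]
      rw [Finset.sum_congr rfl fun x _ => e3 x, Finset.sum_comm]
      refine Finset.sum_congr rfl fun y _ => ?_
      rw [Finset.sum_comm]
      refine Finset.sum_congr rfl fun y' _ => ?_
      rw [Finset.mul_sum]
      refine Finset.sum_congr rfl fun x _ => by ring
    rw [e2]
    calc ∑ y, ∑ y', (g y * g y') * (∑ x, (Bmat F d t x y - c) * (Bmat F d t x y' - c))
        ≤ ∑ y, ∑ y', (g y * g y') * (if y = y' then Q ^ (d - 1) else 0) := by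
          refine Finset.sum_le_sum fun y _ => Finset.sum_le_sum fun y' _ => ?_
          exact mul_le_mul_of_nonneg_left (C_bound hd ht y y') (mul_nonneg (hg y) (hg y'))
      _ = Q ^ (d - 1) * ∑ y, g y ^ 2 := by
          rw [Finset.mul_sum]
          refine Finset.sum_congr rfl fun y _ => ?_
          simp_rw [mul_ite, mul_zero]
          rw [Finset.sum_ite_eq Finset.univ y (fun y' => g y * g y' * Q ^ (d-1))]
          simp only [Finset.mem_univ, if_true]
          ring
  have hQpow : (0:ℝ) ≤ Q ^ (d - 1) := by positivity
  have hsum_g : (0:ℝ) ≤ ∑ y, g y ^ 2 := Finset.sum_nonneg fun y _ => sq_nonneg _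
  have hsum_f : (0:ℝ) ≤ ∑ x, f x ^ 2 := Finset.sum_nonneg fun x _ => sq_nonneg _
  have cs : (∑ x, f x * h x) ^ 2 ≤ (∑ x, f x ^ 2) * ∑ x, h x ^ 2 :=
    Finset.sum_mul_sq_le_sq_mul_sq Finset.univ f h
  rw [step1]
  have habs : |∑ x, f x * h x| = Real.sqrt ((∑ x, f x * h x) ^ 2) :=
    (Real.sqrt_sq_eq_abs _).symm
  rw [habs]
  calc Real.sqrt ((∑ x, f x * h x) ^ 2)
      ≤ Real.sqrt ((∑ x, f x ^ 2) * ∑ x, h x ^ 2) := Real.sqrt_le_sqrt cs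
    _ ≤ Real.sqrt ((∑ x, f x ^ 2) * (Q ^ (d - 1) * ∑ y, g y ^ 2)) := by
        apply Real.sqrt_le_sqrt
        exact mul_le_mul_of_nonneg_left step3 hsum_f
    _ = Real.sqrt (Q ^ (d - 1)) * Real.sqrt (∑ x, f x ^ 2) * Real.sqrt (∑ y, g y ^ 2) := by
        rw [Real.sqrt_mul hsum_f, Real.sqrt_mul hQpow]
        ring
end Key

theorem path_count_prod_recursive (F : Type) [Field F] [Fintype F] [DecidableEq F]
    (d : ℕ) (hd : 2 ≤ d) (t : F) (ht : t ≠ 0) (E : Finset (Fin d → F))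
    (q : ℝ) (hq : q = (Fintype.card F : ℝ))
    (k : ℕ) (hk : 1 ≤ k) :
    |(pathCountProd F d (2 * k + 1) t E : ℝ) -
        q⁻¹ * (pathCountProd F d k t E : ℝ) ^ 2| ≤
      q ^ (((d : ℝ) - 1) / 2) * (pathCountProd F d (2 * k) t E : ℝ) ∧
    |(pathCountProd F d (2 * k) t E : ℝ) -
        q⁻¹ * (pathCountProd F d k t E : ℝ) * (pathCountProd F d (k - 1) t E : ℝ)| ≤
      q ^ (((d : ℝ) - 1) / 2) *
        Real.sqrt ((pathCountProd F d (2 * k) t E : ℝ) *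
          (pathCountProd F d (2 * k - 2) t E : ℝ)) := by
  have hq0 : (0:ℝ) ≤ q := by
    rw [hq]
    positivity
  have hsqrt : Real.sqrt ((Fintype.card F : ℝ) ^ (d - 1)) = q ^ (((d : ℝ) - 1) / 2) := by
    rw [hq, Real.sqrt_eq_rpow, ← Real.rpow_natCast ((Fintype.card F : ℝ)) (d-1),
      ← Real.rpow_mul (by positivity)]
    congr 1
    rw [Nat.cast_sub (by omega : 1 ≤ d)]
    push_cast
    ring
  -- identities
  have e1 : k + 1 + k = 2 * k + 1 := by omega
  have e2 : (k - 1) + (k - 1) = 2 * k - 2 := by omega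
  have e3 : k + 1 + (k - 1) = 2 * k := by omega
  have e4 : k + k = 2 * k := by omega
  have hsumk : ∑ x, fvec F d t E k x = (pathCountProd F d k t E : ℝ) :=
    (pathCount_eq_sum_fvec F d t E k).symm
  have hsumk1 : ∑ x, fvec F d t E (k-1) x = (pathCountProd F d (k-1) t E : ℝ) :=
    (pathCount_eq_sum_fvec F d t E (k-1)).symm
  have hP2k : ∑ x, fvec F d t E k x ^ 2 = (pathCountProd F d (2*k) t E : ℝ) := by
    have := glue F d t E k k
    rw [e4] at this
    rw [← this]
    exact Finset.sum_congr rfl fun x _ => by ring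
  have hP2k2 : ∑ x, fvec F d t E (k-1) x ^ 2 = (pathCountProd F d (2*k-2) t E : ℝ) := by
    have := glue F d t E (k-1) (k-1)
    rw [e2] at this
    rw [← this]
    exact Finset.sum_congr rfl fun x _ => by ring
  have hbilin_kk : ∑ x, ∑ y, fvec F d t E k x * Bmat F d t x y * fvec F d t E k y
      = (pathCountProd F d (2*k+1) t E : ℝ) := by
    have := bilin_eq_pathCount F d t E k k
    rwa [e1] at this
  have hbilin_kk1 : ∑ x, ∑ y, fvec F d t E k x * Bmat F d t x y * fvec F d t E (k-1) y
      = (pathCountProd F d (2*k) t E : ℝ) := by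
    have := bilin_eq_pathCount F d t E k (k-1)
    rwa [e3] at this
  constructor
  · have h1 := key_est hd ht (fvec F d t E k) (fvec F d t E k)
      (fvec_nonneg F d t E k) (fvec_nonneg F d t E k)
    rw [hbilin_kk, hsumk, hP2k, hsqrt] at h1
    rw [← hq] at h1
    calc |(pathCountProd F d (2 * k + 1) t E : ℝ) -
        q⁻¹ * (pathCountProd F d k t E : ℝ) ^ 2|
        = |(pathCountProd F d (2 * k + 1) t E : ℝ) -
            q⁻¹ * ((pathCountProd F d k t E : ℝ) * (pathCountProd F d k t E : ℝ))| := by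
          rw [pow_two]
      _ ≤ q ^ (((d : ℝ) - 1) / 2) * Real.sqrt (pathCountProd F d (2*k) t E : ℝ)
            * Real.sqrt (pathCountProd F d (2*k) t E : ℝ) := h1
      _ = q ^ (((d : ℝ) - 1) / 2) * (pathCountProd F d (2*k) t E : ℝ) := by
          rw [mul_assoc, Real.mul_self_sqrt (by positivity)]
  · have h2 := key_est hd ht (fvec F d t E k) (fvec F d t E (k-1))
      (fvec_nonneg F d t E k) (fvec_nonneg F d t E (k-1))
    rw [hbilin_kk1, hsumk, hsumk1, hP2k, hP2k2, hsqrt] at h2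
    rw [← hq] at h2
    calc |(pathCountProd F d (2 * k) t E : ℝ) -
        q⁻¹ * (pathCountProd F d k t E : ℝ) * (pathCountProd F d (k - 1) t E : ℝ)|
        = |(pathCountProd F d (2 * k) t E : ℝ) -
            q⁻¹ * ((pathCountProd F d k t E : ℝ) * (pathCountProd F d (k - 1) t E : ℝ))| := by
          rw [mul_assoc]
      _ ≤ q ^ (((d : ℝ) - 1) / 2) * Real.sqrt (pathCountProd F d (2*k) t E : ℝ)
            * Real.sqrt (pathCountProd F d (2*k-2) t E : ℝ) := h2
      _ = q ^ (((d : ℝ) - 1) / 2) *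
          Real.sqrt ((pathCountProd F d (2*k) t E : ℝ) *
            (pathCountProd F d (2*k-2) t E : ℝ)) := by
          rw [mul_assoc, ← Real.sqrt_mul (by positivity)]
end

section
/- Let X = (|E| + q^{(d+1)/2})/q. Then for every integer k ≥ 1, P_k^prod(E) ≤ |E|·X^k. -/
set_option linter.unusedSectionVars false
set_option maxHeartbeats 1000000

open Finset
open scoped Classical

namespace PathProdAux

variable {F : Type} [Field F] [Fintype F] [DecidableEq F]

def dotP {d : ℕ} (x y : Fin d → F) : F := ∑ j, x j * y j

lemma dotP_comm {d : ℕ} (x y : Fin d → F) : dotP x y = dotP y x := by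
  unfold dotP; exact Finset.sum_congr rfl fun j _ => mul_comm _ _

lemma dotP_smul_left {d : ℕ} (s : F) (x y : Fin d → F) : dotP (s • x) y = s * dotP x y := by
  unfold dotP; rw [Finset.mul_sum]; exact Finset.sum_congr rfl fun j _ => by
    simp [Pi.smul_apply, smul_eq_mul]; ring

lemma dotP_smul_swap {d : ℕ} (s : F) (x y : Fin d → F) : dotP (s • x) y = dotP x (s • y) := by
  rw [dotP_smul_left, dotP_comm x, ← dotP_smul_left, dotP_comm]

lemma dotP_sub_right {d : ℕ} (x y z : Fin d → F) : dotP x y - dotP x z = dotP x (y - z) := by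
  unfold dotP; rw [← Finset.sum_sub_distrib]; exact Finset.sum_congr rfl fun j _ => by
    simp [mul_sub]

lemma dotP_zero_left {d : ℕ} (y : Fin d → F) : dotP (0 : Fin d → F) y = 0 := by
  unfold dotP; simp

lemma psi_map_sum {ι : Type*} (ψ : AddChar F ℂ) (s : Finset ι) (f : ι → F) :
    ψ (∑ i ∈ s, f i) = ∏ i ∈ s, ψ (f i) := by
  classical
  induction s using Finset.induction with
  | empty => simp
  | insert _ _ h ih => rw [Finset.sum_insert h, Finset.prod_insert h, ψ.map_add_eq_mul, ih]

lemma conj_psi (ψ : AddChar F ℂ) (a : F) : (starRingEnd ℂ) (ψ a) = ψ (-a) := by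
  have h : 0 < ringChar F := Nat.pos_of_ne_zero (CharP.ringChar_ne_zero_of_finite F)
  rw [AddChar.starComp_apply h, AddChar.inv_apply]

lemma sum_psi_mul (ψ : AddChar F ℂ) (hψ : ψ.IsPrimitive) (b : F) :
    ∑ s : F, ψ (s * b) = if b = 0 then (Fintype.card F : ℂ) else 0 := by
  rw [AddChar.sum_mulShift b hψ]; split_ifs <;> simp

lemma sum_field_eq_add_units {M : Type*} [AddCommMonoid M] (f : F → M) :
    ∑ s : F, f s = f 0 + ∑ u : Fˣ, f u := by
  classical
  rw [← Finset.add_sum_erase _ f (Finset.mem_univ 0)]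
  congr 1
  have h1 : ∑ s ∈ Finset.univ.erase (0:F), f s = ∑ a : {a : F // a ≠ 0}, f ↑a := by
    rw [Finset.sum_subtype]; intro x; simp
  rw [h1, ← Equiv.sum_comp (unitsEquivNeZero (G₀ := F)) (fun a => f ↑a)]
  simp

lemma sum_psi_dot {d : ℕ} (ψ : AddChar F ℂ) (hψ : ψ.IsPrimitive) (a : Fin d → F) :
    ∑ x : Fin d → F, ψ (dotP a x) = if a = 0 then (Fintype.card F : ℂ) ^ d else 0 := by
  have h1 : ∀ x : Fin d → F, ψ (dotP a x) = ∏ j, ψ (a j * x j) := fun x =>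
    psi_map_sum ψ _ _
  simp_rw [h1]
  have h2 : ∑ x : Fin d → F, ∏ j, ψ (a j * x j) = ∏ j, ∑ c : F, ψ (a j * c) :=
    (Fintype.prod_sum fun j c => ψ (a j * c)).symm
  rw [h2]
  by_cases ha : a = 0
  · subst ha
    simp [Finset.card_univ]
  · rw [if_neg ha]
    obtain ⟨j, hj⟩ : ∃ j, a j ≠ 0 := by
      by_contra hc; push_neg at hc; exact ha (funext hc)
    apply Finset.prod_eq_zero (Finset.mem_univ j)
    simp_rw [mul_comm (a j)]
    rw [sum_psi_mul ψ hψ, if_neg hj]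


noncomputable def Gt {d : ℕ} (ψ : AddChar F ℂ) (g : (Fin d → F) → ℝ) (z : Fin d → F) : ℂ :=
  ∑ y, (g y : ℂ) * ψ (dotP z y)

noncomputable def Kt {d : ℕ} (ψ : AddChar F ℂ) (t : F) (g : (Fin d → F) → ℝ)
    (x : Fin d → F) : ℂ :=
  ∑ u : Fˣ, ψ (-((u : F) * t)) * Gt ψ g ((u : F) • x)


lemma expansion {d : ℕ} (ψ : AddChar F ℂ) (hψ : ψ.IsPrimitive) (t : F)
    (g h : (Fin d → F) → ℝ) :
    (Fintype.card F : ℂ) *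
        (∑ x, ∑ y, if dotP x y = t then (h x : ℂ) * (g y : ℂ) else 0)
      = (∑ x, (h x : ℂ)) * (∑ y, (g y : ℂ)) + ∑ x, (h x : ℂ) * Kt ψ t g x := by
  have key : ∀ x y : Fin d → F,
      (∑ s : F, ψ (-(s * t)) * ψ (dotP (s • x) y)) =
        if dotP x y = t then (Fintype.card F : ℂ) else 0 := by
    intro x y
    have h1 : ∀ s : F, ψ (-(s * t)) * ψ (dotP (s • x) y) = ψ (s * (dotP x y - t)) := by
      intro s
      rw [← AddChar.map_add_eq_mul]
      congr 1
      rw [dotP_smul_left]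
      ring
    simp_rw [h1]
    rw [sum_psi_mul ψ hψ (dotP x y - t)]
    simp [sub_eq_zero]
  set T : F → ℂ := fun s => ∑ x, ∑ y, (h x : ℂ) * (g y : ℂ) *
      (ψ (-(s * t)) * ψ (dotP (s • x) y)) with hT
  have lhs_eq : (Fintype.card F : ℂ) *
      (∑ x, ∑ y, if dotP x y = t then (h x : ℂ) * (g y : ℂ) else 0) = ∑ s : F, T s := by
    rw [Finset.mul_sum]
    rw [Finset.sum_comm (γ := F)]
    refine Finset.sum_congr rfl fun x _ => ?_
    rw [Finset.mul_sum, Finset.sum_comm (γ := F)]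
    refine Finset.sum_congr rfl fun y _ => ?_
    rw [← Finset.mul_sum, key x y]
    split_ifs with hc <;> ring
  rw [lhs_eq, sum_field_eq_add_units T]
  congr 1
  · -- T 0
    rw [hT]
    simp only [zero_mul, neg_zero, AddChar.map_zero_eq_one, zero_smul, dotP_zero_left,
      mul_one, one_mul]
    rw [Finset.sum_mul_sum]
  · -- units part
    rw [hT]
    unfold Kt Gt
    rw [Finset.sum_comm]
    refine Finset.sum_congr rfl fun x _ => ?_
    rw [Finset.mul_sum]
    refine Finset.sum_congr rfl fun u _ => ?_
    rw [Finset.mul_sum, Finset.mul_sum]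
    refine Finset.sum_congr rfl fun y _ => ?_
    ring

lemma conj_Gt {d : ℕ} (ψ : AddChar F ℂ) (g : (Fin d → F) → ℝ) (z : Fin d → F) :
    (starRingEnd ℂ) (Gt ψ g z) = ∑ y, (g y : ℂ) * ψ (-(dotP z y)) := by
  unfold Gt
  rw [map_sum]
  refine Finset.sum_congr rfl fun y _ => ?_
  rw [map_mul, Complex.conj_ofReal, conj_psi]

/-- Sum over `x` of `G(u•x) * conj (G(u'•x))`. -/

lemma Gmul_sum {d : ℕ} (ψ : AddChar F ℂ) (hψ : ψ.IsPrimitive)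
    (g : (Fin d → F) → ℝ) (u u' : Fˣ) :
    ∑ x : Fin d → F, Gt ψ g ((u : F) • x) * (starRingEnd ℂ) (Gt ψ g ((u' : F) • x))
      = (Fintype.card F : ℂ) ^ d *
          ∑ y, (g y : ℂ) * (g (((u'⁻¹ * u : Fˣ) : F) • y) : ℂ) := by
  have expand : ∀ x : Fin d → F,
      Gt ψ g ((u : F) • x) * (starRingEnd ℂ) (Gt ψ g ((u' : F) • x))
        = ∑ y, ∑ y', (g y : ℂ) * (g y' : ℂ) *
            ψ (dotP x ((u : F) • y - (u' : F) • y')) := by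
    intro x
    rw [conj_Gt]
    unfold Gt
    rw [Finset.sum_mul_sum]
    refine Finset.sum_congr rfl fun y _ => Finset.sum_congr rfl fun y' _ => ?_
    have : ψ (dotP ((u : F) • x) y) * ψ (-(dotP ((u' : F) • x) y'))
        = ψ (dotP x ((u : F) • y - (u' : F) • y')) := by
      rw [← AddChar.map_add_eq_mul]
      congr 1
      rw [dotP_smul_swap, dotP_smul_swap, ← dotP_sub_right]
      ring
    rw [← this]
    ring
  simp_rw [expand]
  rw [Finset.sum_comm]
  have swap2 : ∀ y : Fin d → F,
      (∑ x : Fin d → F, ∑ y', (g y : ℂ) * (g y' : ℂ) *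
          ψ (dotP x ((u : F) • y - (u' : F) • y')))
        = ∑ y', (g y : ℂ) * (g y' : ℂ) *
            ∑ x : Fin d → F, ψ (dotP x ((u : F) • y - (u' : F) • y')) := by
    intro y
    rw [Finset.sum_comm]
    exact Finset.sum_congr rfl fun y' _ => by rw [Finset.mul_sum]
  simp_rw [swap2]
  have ortho : ∀ (c : Fin d → F), (∑ x : Fin d → F, ψ (dotP x c))
      = if c = 0 then (Fintype.card F : ℂ) ^ d else 0 := by
    intro c
    simp_rw [fun x => dotP_comm (d := d) x c]
    exact sum_psi_dot ψ hψ c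
  simp_rw [ortho]
  rw [Finset.mul_sum]
  refine Finset.sum_congr rfl fun y _ => ?_
  have cond : ∀ y' : Fin d → F,
      ((u : F) • y - (u' : F) • y' = 0) ↔ (y' = ((u'⁻¹ * u : Fˣ) : F) • y) := by
    intro y'
    rw [sub_eq_zero]
    constructor
    · intro hxy
      have := congrArg (fun z => ((u' : F))⁻¹ • z) hxy
      simp only [smul_smul, inv_mul_cancel₀ (Units.ne_zero u'), one_smul] at this
      rw [← this]
      congr 1
      push_cast
      ring
    · intro hy'
      subst hy'
      rw [smul_smul]
      congr 1
      push_cast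
      field_simp
  simp_rw [cond]
  rw [Finset.sum_congr rfl (fun y' _ => mul_ite (y' = ((u'⁻¹ * u : Fˣ) : F) • y)
    ((g y : ℂ) * (g y' : ℂ)) ((Fintype.card F : ℂ) ^ d) 0)]
  simp only [mul_zero]
  rw [Finset.sum_ite_eq' Finset.univ (((u'⁻¹ * u : Fˣ) : F) • y)
    (fun y' => (g y : ℂ) * (g y' : ℂ) * (Fintype.card F : ℂ) ^ d)]
  simp only [Finset.mem_univ, if_true]
  ring



variable {F : Type} [Field F] [Fintype F] [DecidableEq F]

lemma Ksq {d : ℕ} (ψ : AddChar F ℂ) (hψ : ψ.IsPrimitive) (t : F) (ht : t ≠ 0)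
    (g : (Fin d → F) → ℝ) :
    ∑ x : Fin d → F, Kt ψ t g x * (starRingEnd ℂ) (Kt ψ t g x)
      = (Fintype.card F : ℂ) ^ d *
          ((Fintype.card F : ℂ) * (∑ y, (g y : ℂ) ^ 2)
            - ∑ w : Fˣ, ∑ y, (g y : ℂ) * (g ((w : F) • y) : ℂ)) := by
  have conjK : ∀ x : Fin d → F, (starRingEnd ℂ) (Kt ψ t g x)
      = ∑ u' : Fˣ, ψ ((u' : F) * t) * (starRingEnd ℂ) (Gt ψ g ((u' : F) • x)) := by
    intro x
    unfold Kt
    rw [map_sum]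
    refine Finset.sum_congr rfl fun u' _ => ?_
    rw [map_mul, conj_psi, neg_neg]
  have step1 : ∑ x : Fin d → F, Kt ψ t g x * (starRingEnd ℂ) (Kt ψ t g x)
      = ∑ u : Fˣ, ∑ u' : Fˣ, (ψ (-((u : F) * t)) * ψ ((u' : F) * t)) *
          ∑ x : Fin d → F, Gt ψ g ((u : F) • x) * (starRingEnd ℂ) (Gt ψ g ((u' : F) • x)) := by
    have h1 : ∀ x : Fin d → F, Kt ψ t g x * (starRingEnd ℂ) (Kt ψ t g x)
        = ∑ u : Fˣ, ∑ u' : Fˣ, (ψ (-((u : F) * t)) * ψ ((u' : F) * t)) *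
            (Gt ψ g ((u : F) • x) * (starRingEnd ℂ) (Gt ψ g ((u' : F) • x))) := by
      intro x
      rw [conjK]
      unfold Kt
      rw [Finset.sum_mul_sum]
      exact Finset.sum_congr rfl fun u _ => Finset.sum_congr rfl fun u' _ => by ring
    simp_rw [h1]
    rw [Finset.sum_comm]
    refine Finset.sum_congr rfl fun u _ => ?_
    rw [Finset.sum_comm]
    refine Finset.sum_congr rfl fun u' _ => ?_
    rw [Finset.mul_sum]
  rw [step1]
  have step2 : ∀ u u' : Fˣ, (ψ (-((u : F) * t)) * ψ ((u' : F) * t)) *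
      (∑ x : Fin d → F, Gt ψ g ((u : F) • x) * (starRingEnd ℂ) (Gt ψ g ((u' : F) • x)))
       = (ψ (-((u : F) * t)) * ψ ((u' : F) * t)) * ((Fintype.card F : ℂ) ^ d *
          ∑ y, (g y : ℂ) * (g (((u'⁻¹ * u : Fˣ) : F) • y) : ℂ)) := by
    intro u u'
    rw [Gmul_sum ψ hψ g u u']
  simp_rw [step2]
  -- reindex u = u' * w
  have step3 : ∀ u' : Fˣ, ∑ u : Fˣ, (ψ (-((u : F) * t)) * ψ ((u' : F) * t)) *
        ((Fintype.card F : ℂ) ^ d * ∑ y, (g y : ℂ) * (g (((u'⁻¹ * u : Fˣ) : F) • y) : ℂ))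
      = ∑ w : Fˣ, ψ ((u' : F) * ((1 - (w : F)) * t)) *
        ((Fintype.card F : ℂ) ^ d * ∑ y, (g y : ℂ) * (g ((w : F) • y) : ℂ)) := by
    intro u'
    rw [← Equiv.sum_comp (Equiv.mulLeft u')
      (fun u => (ψ (-((u : F) * t)) * ψ ((u' : F) * t)) *
        ((Fintype.card F : ℂ) ^ d * ∑ y, (g y : ℂ) * (g (((u'⁻¹ * u : Fˣ) : F) • y) : ℂ)))]
    refine Finset.sum_congr rfl fun w _ => ?_
    simp only [Equiv.coe_mulLeft, inv_mul_cancel_left]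
    congr 1
    rw [← AddChar.map_add_eq_mul]
    congr 1
    push_cast
    ring
  rw [Finset.sum_comm]
  rw [Finset.sum_congr rfl fun u' _ => step3 u']
  rw [Finset.sum_comm]
  have units_sum : ∀ c : F, ∑ u' : Fˣ, ψ ((u' : F) * c)
      = (if c = 0 then (Fintype.card F : ℂ) else 0) - 1 := by
    intro c
    have h0 := sum_field_eq_add_units (f := fun s : F => ψ (s * c))
    rw [sum_psi_mul ψ hψ c] at h0
    simp only [zero_mul, AddChar.map_zero_eq_one] at h0
    rw [eq_sub_iff_add_eq, add_comm, ← h0]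
  have inner_eq : ∀ w : Fˣ,
      (∑ u' : Fˣ, ψ ((u' : F) * ((1 - (w : F)) * t)) *
        ((Fintype.card F : ℂ) ^ d * ∑ y, (g y : ℂ) * (g ((w : F) • y) : ℂ)))
      = ((if w = 1 then (Fintype.card F : ℂ) else 0) - 1) *
        ((Fintype.card F : ℂ) ^ d * ∑ y, (g y : ℂ) * (g ((w : F) • y) : ℂ)) := by
    intro w
    rw [← Finset.sum_mul, units_sum ((1 - (w : F)) * t)]
    congr 2
    by_cases hw : w = 1
    · subst hw; simp
    · rw [if_neg ?_, if_neg hw]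
      intro hc
      rcases mul_eq_zero.1 hc with hc | hc
      · exact hw (Units.ext (by rw [Units.val_one]; linear_combination -hc))
      · exact ht hc
  rw [Finset.sum_congr rfl fun w _ => inner_eq w]
  simp_rw [sub_mul, ite_mul, zero_mul, one_mul]
  rw [Finset.sum_sub_distrib, Finset.sum_ite_eq' Finset.univ (1 : Fˣ)]
  simp only [Finset.mem_univ, if_true, Units.val_one, one_smul]
  rw [mul_sub]
  congr 1
  · simp_rw [pow_two]; ring
  · exact (Finset.mul_sum (Finset.univ : Finset Fˣ)
      (fun w => ∑ y, (g y : ℂ) * (g ((w : F) • y) : ℂ)) ((Fintype.card F : ℂ) ^ d)).symm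


lemma normSq_K_le {d : ℕ} (ψ : AddChar F ℂ) (hψ : ψ.IsPrimitive) (t : F) (ht : t ≠ 0)
    (g : (Fin d → F) → ℝ) (hg : ∀ y, 0 ≤ g y) :
    ∑ x : Fin d → F, Complex.normSq (Kt ψ t g x)
      ≤ (Fintype.card F : ℝ) ^ (d + 1) * ∑ y, g y ^ 2 := by
  have hid := Ksq ψ hψ t ht g
  have hl : ∑ x : Fin d → F, Kt ψ t g x * (starRingEnd ℂ) (Kt ψ t g x)
      = ((∑ x : Fin d → F, Complex.normSq (Kt ψ t g x) : ℝ) : ℂ) := by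
    push_cast
    exact Finset.sum_congr rfl fun x _ => (Complex.mul_conj _)
  have hr : (Fintype.card F : ℂ) ^ d *
        ((Fintype.card F : ℂ) * (∑ y, (g y : ℂ) ^ 2)
          - ∑ w : Fˣ, ∑ y, (g y : ℂ) * (g ((w : F) • y) : ℂ))
      = (((Fintype.card F : ℝ) ^ d *
        ((Fintype.card F : ℝ) * (∑ y, (g y : ℝ) ^ 2)
          - ∑ w : Fˣ, ∑ y, g y * g ((w : F) • y)) : ℝ) : ℂ) := by
    push_cast
    ring
  rw [hl, hr] at hid
  have hreal := Complex.ofReal_inj.1 hid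
  rw [hreal]
  have hW : (0:ℝ) ≤ ∑ w : Fˣ, ∑ y, g y * g ((w : F) • y) :=
    Finset.sum_nonneg fun w _ => Finset.sum_nonneg fun y _ =>
      mul_nonneg (hg y) (hg _)
  have hq : (0:ℝ) ≤ (Fintype.card F : ℝ) ^ d := by positivity
  calc (Fintype.card F : ℝ) ^ d *
        ((Fintype.card F : ℝ) * (∑ y, g y ^ 2) - ∑ w : Fˣ, ∑ y, g y * g ((w : F) • y))
      ≤ (Fintype.card F : ℝ) ^ d * ((Fintype.card F : ℝ) * (∑ y, g y ^ 2)) :=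
        mul_le_mul_of_nonneg_left (sub_le_self _ hW) hq
    _ = (Fintype.card F : ℝ) ^ (d + 1) * ∑ y, g y ^ 2 := by rw [pow_succ]; ring

lemma key_bilinear {d : ℕ} (ψ : AddChar F ℂ) (hψ : ψ.IsPrimitive) (t : F) (ht : t ≠ 0)
    (g h : (Fin d → F) → ℝ) (hg : ∀ y, 0 ≤ g y) :
    (Fintype.card F : ℝ) * (∑ x, ∑ y, if dotP x y = t then h x * g y else 0) ≤
      (∑ x, h x) * (∑ y, g y) +
        Real.sqrt ((Fintype.card F : ℝ) ^ (d + 1)) *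
          (Real.sqrt (∑ x, h x ^ 2) * Real.sqrt (∑ y, g y ^ 2)) := by
  set S : ℝ := ∑ x, ∑ y, if dotP x y = t then h x * g y else 0 with hS
  have hcast : ((Fintype.card F : ℝ) * S - (∑ x, h x) * (∑ y, g y) : ℝ)
      = (∑ x, (h x : ℂ) * Kt ψ t g x).re ∧
      ((0:ℝ) = (∑ x, (h x : ℂ) * Kt ψ t g x).im) := by
    have hexp := expansion ψ hψ t g h
    have hSc : ((S : ℝ) : ℂ) = ∑ x, ∑ y, if dotP x y = t then (h x : ℂ) * (g y : ℂ) else 0 := by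
      rw [hS]
      push_cast
      refine Finset.sum_congr rfl fun x _ => Finset.sum_congr rfl fun y _ => ?_
      split_ifs <;> simp
    have hc : ((((Fintype.card F : ℝ) * S - (∑ x, h x) * (∑ y, g y)) : ℝ) : ℂ)
        = ∑ x, (h x : ℂ) * Kt ψ t g x := by
      rw [Complex.ofReal_sub, Complex.ofReal_mul, hSc, Complex.ofReal_natCast, hexp]
      push_cast
      ring
    constructor
    · rw [← hc]; simp
    · rw [← hc]; simp
  have habs : |(Fintype.card F : ℝ) * S - (∑ x, h x) * (∑ y, g y)|
      ≤ Real.sqrt (∑ x, h x ^ 2) * Real.sqrt (∑ x, Complex.normSq (Kt ψ t g x)) := by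
    have h1 : |(Fintype.card F : ℝ) * S - (∑ x, h x) * (∑ y, g y)|
        = ‖∑ x, (h x : ℂ) * Kt ψ t g x‖ := by
      rw [← Real.norm_eq_abs, ← Complex.norm_real]
      congr 1
      rw [Complex.ext_iff]
      constructor
      · rw [Complex.ofReal_re]; exact hcast.1
      · rw [Complex.ofReal_im]; exact hcast.2
    rw [h1]
    calc ‖∑ x, (h x : ℂ) * Kt ψ t g x‖
        ≤ ∑ x, |h x| * ‖Kt ψ t g x‖ := by
          refine le_trans (norm_sum_le _ _) (le_of_eq ?_)
          exact Finset.sum_congr rfl fun x _ => by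
            rw [norm_mul, Complex.norm_real, Real.norm_eq_abs]
      _ ≤ Real.sqrt (∑ x, h x ^ 2) * Real.sqrt (∑ x, Complex.normSq (Kt ψ t g x)) := by
          have hcs := Finset.sum_mul_sq_le_sq_mul_sq Finset.univ
            (fun x => |h x|) (fun x => ‖Kt ψ t g x‖)
          have hnn : (0:ℝ) ≤ ∑ x, |h x| * ‖Kt ψ t g x‖ :=
            Finset.sum_nonneg fun x _ => mul_nonneg (abs_nonneg _) (norm_nonneg _)
          rw [← Real.sqrt_mul_self hnn]
          rw [← Real.sqrt_mul (Finset.sum_nonneg fun x _ => sq_nonneg (h x))]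
          apply Real.sqrt_le_sqrt
          calc (∑ x, |h x| * ‖Kt ψ t g x‖) * (∑ x, |h x| * ‖Kt ψ t g x‖)
              = (∑ x, |h x| * ‖Kt ψ t g x‖) ^ 2 := (sq _).symm
            _ ≤ (∑ x, |h x| ^ 2) * ∑ x, ‖Kt ψ t g x‖ ^ 2 := hcs
            _ = (∑ x, h x ^ 2) * ∑ x, Complex.normSq (Kt ψ t g x) := by
                congr 1
                · exact Finset.sum_congr rfl fun x _ => sq_abs _
                · exact Finset.sum_congr rfl fun x _ => Complex.sq_norm _
  have hK := normSq_K_le ψ hψ t ht g hg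
  have h2 : Real.sqrt (∑ x, Complex.normSq (Kt ψ t g x))
      ≤ Real.sqrt ((Fintype.card F : ℝ) ^ (d + 1)) * Real.sqrt (∑ y, g y ^ 2) := by
    rw [← Real.sqrt_mul (by positivity)]
    exact Real.sqrt_le_sqrt hK
  have h3 : Real.sqrt (∑ x, h x ^ 2) * Real.sqrt (∑ x, Complex.normSq (Kt ψ t g x))
      ≤ Real.sqrt (∑ x, h x ^ 2) *
        (Real.sqrt ((Fintype.card F : ℝ) ^ (d + 1)) * Real.sqrt (∑ y, g y ^ 2)) :=
    mul_le_mul_of_nonneg_left h2 (Real.sqrt_nonneg _)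
  have h4 : (Fintype.card F : ℝ) * S - (∑ x, h x) * (∑ y, g y)
      ≤ Real.sqrt (∑ x, h x ^ 2) *
        (Real.sqrt ((Fintype.card F : ℝ) ^ (d + 1)) * Real.sqrt (∑ y, g y ^ 2)) :=
    le_trans (le_abs_self _) (le_trans habs h3)
  nlinarith [h4]


noncomputable def indE {d : ℕ} (E : Finset (Fin d → F)) (v : Fin d → F) : ℝ :=
  if v ∈ E then 1 else 0

noncomputable def eW {d : ℕ} (t : F) (v u : Fin d → F) : ℝ := if dotP v u = t then 1 else 0

noncomputable def wP {d : ℕ} (t : F) (E : Finset (Fin d → F)) (k : ℕ)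
    (x : Fin (k + 1) → (Fin d → F)) : ℝ :=
  (∏ i, indE E (x i)) * ∏ i : Fin k, eW t (x i.castSucc) (x i.succ)

noncomputable def gfun {d : ℕ} (t : F) (E : Finset (Fin d → F)) (k : ℕ)
    (v : Fin d → F) : ℝ :=
  ∑ y : Fin (k + 1) → (Fin d → F), (if y 0 = v then 1 else 0) * wP t E k y

lemma indE_nonneg {d : ℕ} (E : Finset (Fin d → F)) (v) : 0 ≤ indE E v := by
  unfold indE; split_ifs <;> norm_num

lemma eW_nonneg {d : ℕ} (t : F) (v u) : 0 ≤ eW (d := d) t v u := by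
  unfold eW; split_ifs <;> norm_num

lemma wP_nonneg {d : ℕ} (t : F) (E : Finset (Fin d → F)) (k : ℕ) (x) :
    0 ≤ wP t E k x :=
  mul_nonneg (Finset.prod_nonneg fun i _ => indE_nonneg E _)
    (Finset.prod_nonneg fun i _ => eW_nonneg t _ _)

lemma gfun_nonneg {d : ℕ} (t : F) (E : Finset (Fin d → F)) (k : ℕ) (v) :
    0 ≤ gfun t E k v :=
  Finset.sum_nonneg fun y _ => mul_nonneg (by split_ifs <;> norm_num) (wP_nonneg _ _ _ _)

lemma wP_eq_ite {d : ℕ} (t : F) (E : Finset (Fin d → F)) (k : ℕ)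
    (x : Fin (k + 1) → (Fin d → F)) :
    wP t E k x = if ((∀ i, x i ∈ E) ∧ ∀ i : Fin k, dotP (x i.castSucc) (x i.succ) = t)
      then 1 else 0 := by
  unfold wP indE eW
  split_ifs with hc
  · rw [Finset.prod_eq_one fun i _ => if_pos (hc.1 i),
      Finset.prod_eq_one fun i _ => if_pos (hc.2 i), mul_one]
  · push_neg at hc
    by_cases h1 : ∀ i, x i ∈ E
    · obtain ⟨i, hi⟩ := hc h1
      rw [Finset.prod_eq_zero (Finset.mem_univ i)
        (show (if dotP (x i.castSucc) (x i.succ) = t then (1:ℝ) else 0) = 0 from if_neg hi),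
        mul_zero]
    · push_neg at h1
      obtain ⟨i, hi⟩ := h1
      rw [Finset.prod_eq_zero (Finset.mem_univ i)
        (show (if x i ∈ E then (1:ℝ) else 0) = 0 from if_neg hi), zero_mul]

lemma card_eq_sum_wP {d : ℕ} (t : F) (E : Finset (Fin d → F)) (k : ℕ) :
    ((Finset.univ.filter (fun x : Fin (k + 1) → (Fin d → F) =>
        (∀ i, x i ∈ E) ∧ ∀ i : Fin k, dotP (x i.castSucc) (x i.succ) = t)).card : ℝ)
      = ∑ x : Fin (k + 1) → (Fin d → F), wP t E k x := by
  rw [Finset.card_filter]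
  push_cast
  refine Finset.sum_congr rfl fun x _ => ?_
  rw [wP_eq_ite]

lemma sum_gfun {d : ℕ} (t : F) (E : Finset (Fin d → F)) (k : ℕ) :
    ∑ v : Fin d → F, gfun t E k v = ∑ x : Fin (k + 1) → (Fin d → F), wP t E k x := by
  unfold gfun
  rw [Finset.sum_comm]
  refine Finset.sum_congr rfl fun y _ => ?_
  rw [← Finset.sum_mul]
  rw [Finset.sum_ite_eq Finset.univ (y 0) (fun _ => (1:ℝ))]
  simp

lemma gfun_zero {d : ℕ} (t : F) (E : Finset (Fin d → F)) (v : Fin d → F) :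
    gfun t E 0 v = indE E v := by
  unfold gfun
  have hw : ∀ y : Fin 1 → (Fin d → F), wP t E 0 y = indE E (y 0) := by
    intro y
    unfold wP
    rw [Fin.prod_univ_one, Finset.univ_eq_empty, Finset.prod_empty, mul_one]
  simp_rw [hw]
  rw [← Equiv.sum_comp (Equiv.funUnique (Fin 1) (Fin d → F)).symm
    (fun y => (if y 0 = v then (1:ℝ) else 0) * indE E (y 0))]
  have hb : ∀ u : Fin d → F,
      (if (Equiv.funUnique (Fin 1) (Fin d → F)).symm u 0 = v then (1:ℝ) else 0) *
        indE E ((Equiv.funUnique (Fin 1) (Fin d → F)).symm u 0)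
      = if u = v then indE E u else 0 := by
    intro u
    have hu : (Equiv.funUnique (Fin 1) (Fin d → F)).symm u 0 = u := rfl
    rw [hu]
    split_ifs <;> simp
  simp_rw [hb]
  rw [Finset.sum_ite_eq' Finset.univ v (fun u => indE E u)]
  simp

lemma wP_cons {d : ℕ} (t : F) (E : Finset (Fin d → F)) (k : ℕ)
    (v : Fin d → F) (y : Fin (k + 1) → (Fin d → F)) :
    wP t E (k + 1) (Fin.cons v y) = indE E v * eW t v (y 0) * wP t E k y := by
  unfold wP
  simp only [Fin.prod_univ_succ]
  simp only [Fin.cons_zero, Fin.cons_succ, Fin.castSucc_zero]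
  simp_rw [← Fin.succ_castSucc, Fin.cons_succ]
  ring

lemma gfun_succ {d : ℕ} (t : F) (E : Finset (Fin d → F)) (k : ℕ) (v : Fin d → F) :
    gfun t E (k + 1) v = indE E v * ∑ u, eW t v u * gfun t E k u := by
  unfold gfun
  rw [← Equiv.sum_comp (Fin.consEquiv (fun _ : Fin (k + 2) => Fin d → F))
    (fun x => (if x 0 = v then (1:ℝ) else 0) * wP t E (k + 1) x)]
  rw [Fintype.sum_prod_type]
  have h1 : ∀ (v' : Fin d → F) (y : Fin (k + 1) → (Fin d → F)),
      ((if (Fin.consEquiv (fun _ : Fin (k + 2) => Fin d → F)) (v', y) 0 = v then (1:ℝ) else 0) *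
        wP t E (k + 1) ((Fin.consEquiv (fun _ : Fin (k + 2) => Fin d → F)) (v', y)))
      = (if v' = v then (1:ℝ) else 0) * (indE E v' * eW t v' (y 0) * wP t E k y) := by
    intro v' y
    have he : (Fin.consEquiv (fun _ : Fin (k + 2) => Fin d → F)) (v', y) = Fin.cons v' y := rfl
    rw [he, wP_cons, Fin.cons_zero]
  simp_rw [h1]
  rw [Finset.sum_congr rfl (fun v' _ => (Finset.mul_sum _ _ _).symm)]
  simp_rw [ite_mul, one_mul, zero_mul]
  rw [Finset.sum_ite_eq' Finset.univ v
    (fun v' => ∑ y : Fin (k+1) → (Fin d → F), indE E v' * eW t v' (y 0) * wP t E k y)]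
  simp only [Finset.mem_univ, if_true]
  -- now: ∑ y, indE v * eW v (y 0) * wP y = indE v * ∑ u, eW v u * gfun k u
  rw [Finset.mul_sum]
  -- RHS: ∑ u, indE v * (eW v u * gfun u); transform RHS to ∑ y form
  have h2 : ∀ u : Fin d → F, indE E v *
        (eW t v u * ∑ x : Fin (k+1) → (Fin d → F), if x 0 = u then wP t E k x else 0)
      = ∑ y : Fin (k+1) → (Fin d → F),
          if y 0 = u then indE E v * eW t v u * wP t E k y else 0 := by
    intro u
    rw [Finset.mul_sum, Finset.mul_sum]
    refine Finset.sum_congr rfl fun y _ => ?_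
    split_ifs <;> ring
  simp_rw [h2]
  rw [Finset.sum_comm]
  refine Finset.sum_congr rfl fun y _ => ?_
  have h3 : ∀ u, (if y 0 = u then indE E v * eW t v u * wP t E k y else 0)
      = if u = y 0 then indE E v * eW t v u * wP t E k y else 0 := by
    intro u
    split_ifs with hh1 hh2 hh2 <;> simp_all
  simp_rw [h3]
  rw [Finset.sum_ite_eq' Finset.univ (y 0) (fun u => indE E v * eW t v u * wP t E k y)]
  simp

lemma gfun_supp {d : ℕ} (t : F) (E : Finset (Fin d → F)) (k : ℕ) (v : Fin d → F)
    (hv : v ∉ E) : gfun t E k v = 0 := by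
  unfold gfun
  refine Finset.sum_eq_zero fun y _ => ?_
  by_cases hy : y 0 = v
  · have hz : wP t E k y = 0 := by
      rw [wP_eq_ite, if_neg]
      rintro ⟨hmem, -⟩
      exact hv (hy ▸ hmem 0)
    rw [hz, mul_zero]
  · rw [if_neg hy, zero_mul]


lemma sum_indE {d : ℕ} (E : Finset (Fin d → F)) : ∑ v, indE E v = (E.card : ℝ) := by
  unfold indE
  rw [Finset.sum_boole]
  congr 1
  rw [Finset.filter_mem_eq_inter, Finset.univ_inter]

lemma sum_le_sqrt_card {d : ℕ} (E : Finset (Fin d → F)) (f : (Fin d → F) → ℝ)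
    (hf : ∀ v, 0 ≤ f v) (hsupp : ∀ v, v ∉ E → f v = 0) :
    ∑ v, f v ≤ Real.sqrt (E.card) * Real.sqrt (∑ v, f v ^ 2) := by
  have h1 : ∑ v, f v = ∑ v, indE E v * f v := by
    refine Finset.sum_congr rfl fun v _ => ?_
    unfold indE
    by_cases hv : v ∈ E
    · rw [if_pos hv, one_mul]
    · rw [if_neg hv, zero_mul, hsupp v hv]
  have hcs := Finset.sum_mul_sq_le_sq_mul_sq Finset.univ (fun v => indE E v) f
  have hind2 : ∑ v, indE E v ^ 2 = (E.card : ℝ) := by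
    rw [← sum_indE E]
    refine Finset.sum_congr rfl fun v _ => ?_
    unfold indE
    split_ifs <;> norm_num
  have hnn : 0 ≤ ∑ v, f v := Finset.sum_nonneg fun v _ => hf v
  rw [h1] at hnn ⊢
  rw [← Real.sqrt_mul_self hnn, ← Real.sqrt_mul (Nat.cast_nonneg _)]
  apply Real.sqrt_le_sqrt
  calc (∑ v, indE E v * f v) * (∑ v, indE E v * f v) = (∑ v, indE E v * f v) ^ 2 := (sq _).symm
    _ ≤ (∑ v, indE E v ^ 2) * ∑ v, f v ^ 2 := hcs
    _ = (E.card : ℝ) * ∑ v, f v ^ 2 := by rw [hind2]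

lemma step_bound {d : ℕ} (ψ : AddChar F ℂ) (hψ : ψ.IsPrimitive) (t : F) (ht : t ≠ 0)
    (E : Finset (Fin d → F)) (gg : (Fin d → F) → ℝ) (hgg : ∀ v, 0 ≤ gg v)
    (hsupp : ∀ v, v ∉ E → gg v = 0) :
    Real.sqrt (∑ v, (indE E v * ∑ u, eW t v u * gg u) ^ 2)
      ≤ (((E.card : ℝ) + Real.sqrt ((Fintype.card F : ℝ) ^ (d + 1))) / (Fintype.card F : ℝ)) *
        Real.sqrt (∑ v, gg v ^ 2) := by
  set hh : (Fin d → F) → ℝ := fun v => indE E v * ∑ u, eW t v u * gg u with hhh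
  have hhnn : ∀ v, 0 ≤ hh v := fun v =>
    mul_nonneg (indE_nonneg E v)
      (Finset.sum_nonneg fun u _ => mul_nonneg (eW_nonneg t v u) (hgg u))
  have hhsupp : ∀ v, v ∉ E → hh v = 0 := by
    intro v hv
    rw [hhh]
    simp only []
    unfold indE
    rw [if_neg hv, zero_mul]
  set A : ℝ := ∑ v, hh v ^ 2 with hA
  set B : ℝ := ∑ v, gg v ^ 2 with hB
  have hAnn : 0 ≤ A := Finset.sum_nonneg fun v _ => sq_nonneg _
  have hBnn : 0 ≤ B := Finset.sum_nonneg fun v _ => sq_nonneg _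
  have hA_eq : A = ∑ x, ∑ y, if dotP x y = t then hh x * gg y else 0 := by
    rw [hA]
    refine Finset.sum_congr rfl fun x _ => ?_
    have hx2 : hh x ^ 2 = hh x * ∑ u, eW t x u * gg u := by
      rw [hhh]
      simp only []
      unfold indE
      split_ifs <;> ring
    rw [hx2, Finset.mul_sum]
    refine Finset.sum_congr rfl fun y _ => ?_
    unfold eW
    split_ifs <;> ring
  have hkey := key_bilinear ψ hψ t ht gg hh hgg
  rw [← hA_eq] at hkey
  have hsum_h : ∑ v, hh v ≤ Real.sqrt (E.card) * Real.sqrt A :=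
    sum_le_sqrt_card E hh hhnn hhsupp
  have hsum_g : ∑ v, gg v ≤ Real.sqrt (E.card) * Real.sqrt B :=
    sum_le_sqrt_card E gg hgg hsupp
  have hq_pos : (0:ℝ) < (Fintype.card F : ℝ) := by
    have := Fintype.card_pos (α := F)
    positivity
  have hprod : (∑ v, hh v) * (∑ v, gg v) ≤ (E.card : ℝ) * (Real.sqrt A * Real.sqrt B) := by
    have h1 : (∑ v, hh v) * (∑ v, gg v)
        ≤ (Real.sqrt (E.card) * Real.sqrt A) * (Real.sqrt (E.card) * Real.sqrt B) := by
      apply mul_le_mul hsum_h hsum_g (Finset.sum_nonneg fun v _ => hgg v)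
      positivity
    calc (∑ v, hh v) * (∑ v, gg v)
        ≤ (Real.sqrt (E.card) * Real.sqrt A) * (Real.sqrt (E.card) * Real.sqrt B) := h1
      _ = (Real.sqrt (E.card) * Real.sqrt (E.card)) * (Real.sqrt A * Real.sqrt B) := by ring
      _ = (E.card : ℝ) * (Real.sqrt A * Real.sqrt B) := by
          rw [Real.mul_self_sqrt (Nat.cast_nonneg _)]
  set c : ℝ := (E.card : ℝ) + Real.sqrt ((Fintype.card F : ℝ) ^ (d + 1)) with hc
  have hcnn : 0 ≤ c := by positivity
  have hmain : (Fintype.card F : ℝ) * A ≤ c * (Real.sqrt A * Real.sqrt B) := by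
    calc (Fintype.card F : ℝ) * A
        ≤ (∑ v, hh v) * (∑ v, gg v) +
          Real.sqrt ((Fintype.card F : ℝ) ^ (d + 1)) * (Real.sqrt A * Real.sqrt B) := hkey
      _ ≤ (E.card : ℝ) * (Real.sqrt A * Real.sqrt B) +
          Real.sqrt ((Fintype.card F : ℝ) ^ (d + 1)) * (Real.sqrt A * Real.sqrt B) := by
          linarith [hprod]
      _ = c * (Real.sqrt A * Real.sqrt B) := by rw [hc]; ring
  rcases eq_or_lt_of_le (Real.sqrt_nonneg A) with h0 | h0
  · rw [← h0]
    exact mul_nonneg (div_nonneg hcnn hq_pos.le) (Real.sqrt_nonneg _)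
  · have h5 : (Fintype.card F : ℝ) * Real.sqrt A ≤ c * Real.sqrt B := by
      have h6 : ((Fintype.card F : ℝ) * Real.sqrt A) * Real.sqrt A
          ≤ (c * Real.sqrt B) * Real.sqrt A := by
        calc ((Fintype.card F : ℝ) * Real.sqrt A) * Real.sqrt A
            = (Fintype.card F : ℝ) * (Real.sqrt A * Real.sqrt A) := by ring
          _ = (Fintype.card F : ℝ) * A := by rw [Real.mul_self_sqrt hAnn]
          _ ≤ c * (Real.sqrt A * Real.sqrt B) := hmain
          _ = (c * Real.sqrt B) * Real.sqrt A := by ring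
      exact le_of_mul_le_mul_right h6 h0
    rw [div_mul_eq_mul_div, le_div_iff₀ hq_pos]
    calc Real.sqrt A * (Fintype.card F : ℝ) = (Fintype.card F : ℝ) * Real.sqrt A := by ring
      _ ≤ c * Real.sqrt B := h5


lemma sum_indE_sq {d : ℕ} (E : Finset (Fin d → F)) : ∑ v, indE E v ^ 2 = (E.card : ℝ) := by
  rw [← sum_indE E]
  refine Finset.sum_congr rfl fun v _ => ?_
  unfold indE
  split_ifs <;> norm_num


end PathProdAux

open PathProdAux

theorem path_count_prod_upper (F : Type) [Field F] [Fintype F] [DecidableEq F]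
    (d : ℕ) (hd : 2 ≤ d) (t : F) (ht : t ≠ 0) (E : Finset (Fin d → F))
    (q : ℝ) (hq : q = (Fintype.card F : ℝ))
    (X : ℝ) (hX : X = ((E.card : ℝ) + q ^ (((d : ℝ) + 1) / 2)) / q)
    (k : ℕ) (hk : 1 ≤ k) :
    (pathCountProd F d k t E : ℝ) ≤ (E.card : ℝ) * X ^ k := by
  classical
  set ψ : AddChar F ℂ := AddChar.FiniteField.primitiveChar_to_Complex F with hψdef
  have hψ : ψ.IsPrimitive := AddChar.FiniteField.primitiveChar_to_Complex_isPrimitive F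
  have hqpos : (0:ℝ) < (Fintype.card F : ℝ) := by
    have := Fintype.card_pos (α := F)
    positivity
  set Xq : ℝ := ((E.card : ℝ) + Real.sqrt ((Fintype.card F : ℝ) ^ (d + 1))) /
      (Fintype.card F : ℝ) with hXq
  have hXqnn : 0 ≤ Xq := by
    rw [hXq]; positivity
  have hXeq : X = Xq := by
    rw [hX, hq, hXq]
    congr 2
    rw [show ((d:ℝ)+1)/2 = ((d+1 : ℕ) : ℝ) * (1/2 : ℝ) by push_cast; ring]
    rw [Real.rpow_mul (le_of_lt hqpos), Real.rpow_natCast, ← Real.sqrt_eq_rpow]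
  have hN : ∀ m : ℕ, Real.sqrt (∑ v, gfun t E m v ^ 2) ≤ Xq ^ m * Real.sqrt (E.card : ℝ) := by
    intro m
    induction m with
    | zero =>
      simp_rw [gfun_zero]
      rw [sum_indE_sq, pow_zero, one_mul]
    | succ m ih =>
      have hstep := step_bound ψ hψ t ht E (gfun t E m) (gfun_nonneg t E m)
        (gfun_supp t E m)
      calc Real.sqrt (∑ v, gfun t E (m+1) v ^ 2)
          = Real.sqrt (∑ v, (indE E v * ∑ u, eW t v u * gfun t E m u) ^ 2) := by
            simp_rw [gfun_succ]
        _ ≤ Xq * Real.sqrt (∑ v, gfun t E m v ^ 2) := hstep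
        _ ≤ Xq * (Xq ^ m * Real.sqrt (E.card : ℝ)) := mul_le_mul_of_nonneg_left ih hXqnn
        _ = Xq ^ (m+1) * Real.sqrt (E.card : ℝ) := by ring
  have hP : (pathCountProd F d k t E : ℝ) = ∑ v, gfun t E k v := by
    rw [sum_gfun, ← card_eq_sum_wP]
    rfl
  rw [hP, hXeq]
  calc ∑ v, gfun t E k v
      ≤ Real.sqrt (E.card : ℝ) * Real.sqrt (∑ v, gfun t E k v ^ 2) :=
        sum_le_sqrt_card E _ (gfun_nonneg t E k) (gfun_supp t E k)
    _ ≤ Real.sqrt (E.card : ℝ) * (Xq ^ k * Real.sqrt (E.card : ℝ)) :=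
        mul_le_mul_of_nonneg_left (hN k) (Real.sqrt_nonneg _)
    _ = (Real.sqrt (E.card : ℝ) * Real.sqrt (E.card : ℝ)) * Xq ^ k := by ring
    _ = (E.card : ℝ) * Xq ^ k := by rw [Real.mul_self_sqrt (Nat.cast_nonneg _)]
end
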